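/- arXiv:2602.21159 — 7 statements merged into one kernel-verified Lean document; each statement's English description precedes it below -/
import Mathlib

section
/- Let N = 2 and α₁, α₂ ∈ ℂ with Im α₁ ≠ 0. Then 𝓜₂(α₁,α₂) is a dense G_δ subset of ℂ if and only if the three real numbers 1, Re α₂ − Re α₁·(Im α₂/Im α₁), and Im α₂/Im α₁ are linearly independent over ℚ (equivalently over ℤ): the only rationals (r₀,r₁,r₂) with r₀ + r₁·(Re α₂ − Re α₁·Im α₂/Im α₁) + r₂·(Im α₂/Im α₁) = 0 are r₀ = r₁ = r₂ = 0. -/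
set_option maxHeartbeats 1000000

open Filter Topology Set

/-- The Diophantine condition `D((α₁, α₂), λ)` for two coefficients (`N = 2`). -/
def dioph2 (a b lam : ℂ) : Prop :=
  ∃ C > (0 : ℝ), ∃ M > (0 : ℝ), ∃ R > (0 : ℝ),
    ∀ τ ξ η : ℤ, R ≤ (|τ| : ℝ) + (|ξ| : ℝ) + (|η| : ℝ) →
      C * (((|τ| : ℝ) + (|ξ| : ℝ) + (|η| : ℝ)) ^ (-M)) ≤
        ‖(τ : ℂ) + a * (ξ : ℂ) + b * (η : ℂ) - lam‖

lemma kron1 (γ : ℝ) (hγ : ∀ m k : ℤ, (m:ℝ) + k*γ = 0 → k = 0) :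
    ∀ y ε : ℝ, 0 < ε → ∃ η ξ : ℤ, |γ*η + ξ - y| < ε := by
  have hadd : ∀ p q : ℤ × ℤ, (fun p : ℤ × ℤ => γ*(p.1:ℝ) + (p.2:ℝ)) (p + q)
      = (fun p : ℤ × ℤ => γ*(p.1:ℝ) + (p.2:ℝ)) p + (fun p : ℤ × ℤ => γ*(p.1:ℝ) + (p.2:ℝ)) q := by
    intro p q
    simp [Prod.fst_add, Prod.snd_add]
    push_cast
    ring
  set ψ : ℤ × ℤ →+ ℝ := AddMonoidHom.mk' (fun p : ℤ × ℤ => γ*(p.1:ℝ) + (p.2:ℝ)) hadd with hψ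
  rcases AddSubgroup.dense_or_cyclic ψ.range with hd | ⟨a, ha⟩
  · intro y ε hε
    rcases Metric.mem_closure_iff.1 (hd.closure_eq ▸ Set.mem_univ y :
        y ∈ closure (ψ.range : Set ℝ)) ε hε with ⟨b, hb, hdist⟩
    rcases hb with ⟨⟨η, ξ⟩, rfl⟩
    exact ⟨η, ξ, by rw [Real.dist_eq, abs_sub_comm] at hdist; exact hdist⟩
  · exfalso
    have h1 : (1:ℝ) ∈ ψ.range := ⟨(0,1), by simp [hψ]⟩
    have hγm : γ ∈ ψ.range := ⟨(1,0), by simp [hψ]⟩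
    rw [ha, AddSubgroup.mem_closure_singleton] at h1 hγm
    rcases h1 with ⟨k, hk⟩
    rcases hγm with ⟨m, hm⟩
    have hk0 : k ≠ 0 := by
      rintro rfl
      simp at hk
    have : ((-m : ℤ):ℝ) + ((k:ℤ):ℝ)*γ = 0 := by
      rw [zsmul_eq_mul] at hk hm
      push_cast
      linear_combination (m:ℝ) * hk - (k:ℝ) * hm
    exact hk0 (hγ (-m) k this)


lemma kron2 (β γ : ℝ)
    (hind : ∀ q₀ q₁ q₂ : ℤ, (q₀:ℝ) + (q₁:ℝ)*β + (q₂:ℝ)*γ = 0 → q₁ = 0 ∧ q₂ = 0)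
    (x y ε : ℝ) (hε : 0 < ε) :
    ∃ τ ξ η : ℤ, |(τ:ℝ) + β*η - x| < ε ∧ |(ξ:ℝ) + γ*η - y| < ε := by
  have hγ : ∀ m k : ℤ, (m:ℝ) + k*γ = 0 → k = 0 := by
    intro m k h
    exact (hind m 0 k (by push_cast; linarith)).2
  have hadd : ∀ p q : ℤ × ℤ × ℤ,
      (fun p : ℤ × ℤ × ℤ => (((p.1:ℝ) + β*(p.2.2:ℝ), (p.2.1:ℝ) + γ*(p.2.2:ℝ)) : ℝ × ℝ)) (p + q)
      = (fun p : ℤ × ℤ × ℤ => (((p.1:ℝ) + β*(p.2.2:ℝ), (p.2.1:ℝ) + γ*(p.2.2:ℝ)) : ℝ × ℝ)) p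
        + (fun p : ℤ × ℤ × ℤ => (((p.1:ℝ) + β*(p.2.2:ℝ), (p.2.1:ℝ) + γ*(p.2.2:ℝ)) : ℝ × ℝ)) q := by
    intro p q
    simp only [Prod.fst_add, Prod.snd_add, Prod.mk_add_mk, Prod.mk.injEq]
    constructor <;> · push_cast; ring
  set φ : ℤ × ℤ × ℤ →+ ℝ × ℝ :=
    AddMonoidHom.mk' (fun p : ℤ × ℤ × ℤ =>
      (((p.1:ℝ) + β*(p.2.2:ℝ), (p.2.1:ℝ) + γ*(p.2.2:ℝ)) : ℝ × ℝ)) hadd with hφ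
  set A : AddSubgroup (ℝ × ℝ) := φ.range.topologicalClosure with hA
  have hGA : ∀ p : ℤ × ℤ × ℤ,
      ((((p.1:ℝ) + β*(p.2.2:ℝ)), ((p.2.1:ℝ) + γ*(p.2.2:ℝ))) : ℝ × ℝ) ∈ A :=
    fun p => AddSubgroup.le_topologicalClosure _ ⟨p, rfl⟩
  have hAclosed : IsClosed (A : Set (ℝ × ℝ)) := AddSubgroup.isClosed_topologicalClosure _
  -- reduction: it suffices to show (x,y) ∈ A
  suffices hxy : (x, y) ∈ A by
    have hxy' : (x, y) ∈ closure (φ.range : Set (ℝ × ℝ)) := by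
      rw [← AddSubgroup.topologicalClosure_coe]
      exact hxy
    rcases Metric.mem_closure_iff.1 hxy' ε hε with ⟨b, hb, hd⟩
    rcases hb with ⟨⟨τ, ξ, η⟩, rfl⟩
    rw [Prod.dist_eq, max_lt_iff] at hd
    refine ⟨τ, ξ, η, ?_, ?_⟩
    · have := hd.1
      rw [Real.dist_eq, abs_sub_comm] at this
      simpa [hφ] using this
    · have := hd.2
      rw [Real.dist_eq, abs_sub_comm] at this
      simpa [hφ] using this
  -- the subgroup F of first coordinates over 0
  have hmemF : ∀ u : ℝ, ((u, (0:ℝ)) ∈ A) → u ∈ A.comap (AddMonoidHom.inl ℝ ℝ) := by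
    intro u hu
    simpa [AddSubgroup.mem_comap] using hu
  set F : AddSubgroup ℝ := A.comap (AddMonoidHom.inl ℝ ℝ) with hFdef
  have hmemF' : ∀ u : ℝ, u ∈ F ↔ ((u, (0:ℝ)) ∈ A) := by
    intro u
    simp [hFdef, AddSubgroup.mem_comap, AddMonoidHom.inl_apply]
  have hF1 : (1:ℝ) ∈ F := by
    rw [hmemF']
    simpa using hGA (1, 0, 0)
  have hFclosed : IsClosed (F : Set ℝ) := by
    have : (F : Set ℝ) = (fun u : ℝ => ((u, (0:ℝ)) : ℝ × ℝ)) ⁻¹' (A : Set (ℝ × ℝ)) := by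
      ext u
      simp [hmemF' u]
    rw [this]
    exact hAclosed.preimage (continuous_id.prodMk continuous_const)
  rcases AddSubgroup.dense_or_cyclic F with hd | ⟨a, ha⟩
  · -- F dense hence F = ℝ
    have hFuniv : ∀ u : ℝ, ((u, (0:ℝ)) : ℝ × ℝ) ∈ A := by
      intro u
      rw [← hmemF' u]
      have : u ∈ closure (F : Set ℝ) := hd u
      rwa [hFclosed.closure_eq] at this
    have : (x, y) ∈ closure (A : Set (ℝ × ℝ)) := by
      rw [Metric.mem_closure_iff]
      intro ε' hε'
      rcases kron1 γ hγ y ε' hε' with ⟨η, ξ, hyd⟩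
      refine ⟨((x : ℝ), (ξ:ℝ) + γ*η), ?_, ?_⟩
      · have h1 : (((0:ℤ):ℝ) + β*((η:ℤ):ℝ), ((ξ:ℤ):ℝ) + γ*((η:ℤ):ℝ)) ∈ A := hGA (0, ξ, η)
        have h2 := A.add_mem h1 (hFuniv (x - β*η))
        have h3 : ((x, (ξ:ℝ) + γ*η) : ℝ × ℝ)
            = (((0:ℤ):ℝ) + β*((η:ℤ):ℝ), ((ξ:ℤ):ℝ) + γ*((η:ℤ):ℝ)) + ((x - β*η, 0) : ℝ × ℝ) := by
          rw [Prod.mk_add_mk, Prod.mk.injEq]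
          constructor <;> push_cast <;> ring
        rw [h3]
        exact h2
      · rw [Prod.dist_eq]
        simp only [dist_self, Real.dist_eq]
        rw [max_lt_iff]
        constructor
        · exact hε'
        · rw [abs_sub_comm]
          calc |(ξ:ℝ) + γ*η - y| = |γ*η + ξ - y| := by ring_nf
          _ < ε' := hyd
    rwa [hAclosed.closure_eq] at this
  · -- F cyclic: derive a contradiction
    exfalso
    have h1a : ∃ k : ℤ, (k:ℝ) * a = 1 := by
      have h := hF1
      rw [ha, AddSubgroup.mem_closure_singleton] at h
      rcases h with ⟨k, hk⟩
      exact ⟨k, by rw [← zsmul_eq_mul]; exact hk⟩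
    rcases h1a with ⟨k, hk⟩
    have ha0 : a ≠ 0 := by rintro rfl; simp at hk
    set c : ℝ := |a| with hc
    have hc0 : 0 < c := abs_pos.2 ha0
    have hFc : ∀ u : ℝ, ((u, (0:ℝ)) ∈ A) → ∃ m : ℤ, u = m * c := by
      intro u hu
      have h : u ∈ F := (hmemF' u).2 hu
      rw [ha, AddSubgroup.mem_closure_singleton] at h
      rcases h with ⟨m, hm⟩
      rw [zsmul_eq_mul] at hm
      rcases abs_cases a with ⟨h1, _⟩ | ⟨h1, _⟩
      · exact ⟨m, by rw [← hm, hc, h1]⟩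
      · refine ⟨-m, ?_⟩
        rw [← hm, hc, h1]
        push_cast
        ring
    have haF : a ∈ F := by
      rw [ha]
      exact AddSubgroup.mem_closure_singleton.2 ⟨1, one_zsmul a⟩
    have hcF : ((c, (0:ℝ)) : ℝ × ℝ) ∈ A := by
      have h : c ∈ F := by
        rcases abs_cases a with ⟨h1, _⟩ | ⟨h1, _⟩
        · rw [hc, h1]; exact haF
        · rw [hc, h1]; exact F.neg_mem haF
      exact (hmemF' c).1 h
    have hmcF : ∀ m : ℤ, (((m:ℝ) * c, (0:ℝ)) : ℝ × ℝ) ∈ A := by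
      intro m
      have h := A.zsmul_mem hcF m
      simpa [Prod.smul_mk, zsmul_eq_mul] using h
    obtain ⟨K, hK⟩ : ∃ K : ℤ, (K:ℝ) * c = 1 := by
      rcases abs_cases a with ⟨h1, _⟩ | ⟨h1, _⟩
      · exact ⟨k, by rw [hc, h1]; exact hk⟩
      · refine ⟨-k, ?_⟩
        rw [hc, h1]
        push_cast
        linear_combination hk
    have hK0 : K ≠ 0 := by
      rintro rfl
      simp at hK
    -- Step 5a : rigidity near the axis
    have h5a : ∃ δ : ℝ, 0 < δ ∧
        ∀ u v : ℝ, ((u, v) : ℝ × ℝ) ∈ A → |v| ≤ δ → ∃ m : ℤ, |u - m*c| < c/4 := by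
      by_contra hcon
      push_neg at hcon
      choose us vs hmem hsmall hfar using fun j : ℕ => hcon (1/(j+1)) (by positivity)
      set us' : ℕ → ℝ := fun j => us j - ⌊us j / c⌋ * c with hus'
      have hmem' : ∀ j, ((us' j, vs j) : ℝ × ℝ) ∈ A := by
        intro j
        have h := A.sub_mem (hmem j) (hmcF ⌊us j / c⌋)
        simpa [hus', Prod.mk_sub_mk] using h
      have hfar' : ∀ j (m : ℤ), c/4 ≤ |us' j - m*c| := by
        intro j m
        have h := hfar j (m + ⌊us j / c⌋)
        have heq : us j - (↑(m + ⌊us j / c⌋))*c = us' j - m*c := by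
          rw [hus']
          push_cast
          ring
        rwa [heq] at h
      have hrange : ∀ j, us' j ∈ Icc (0:ℝ) c := fun j =>
        ⟨Int.sub_floor_div_mul_nonneg _ hc0, le_of_lt (Int.sub_floor_div_mul_lt _ hc0)⟩
      rcases isCompact_Icc.tendsto_subseq hrange with ⟨x0, _, σ, hσ, hlim⟩
      have hv0 : Tendsto (fun j => vs (σ j)) atTop (𝓝 0) := by
        refine squeeze_zero_norm (fun j => ?_) tendsto_one_div_add_atTop_nhds_zero_nat
        calc ‖vs (σ j)‖ ≤ 1/((σ j : ℝ)+1) := hsmall (σ j)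
        _ ≤ 1/((j:ℝ)+1) := by
            apply one_div_le_one_div_of_le (by positivity)
            have h : j ≤ σ j := hσ.le_apply
            have h2 : ((j:ℕ):ℝ) ≤ ((σ j : ℕ):ℝ) := by exact_mod_cast h
            linarith
      have hlim2 : Tendsto (fun j => ((us' (σ j), vs (σ j)) : ℝ × ℝ)) atTop (𝓝 (x0, 0)) :=
        hlim.prodMk_nhds hv0
      have hx0A : ((x0, (0:ℝ)) : ℝ × ℝ) ∈ A :=
        hAclosed.mem_of_tendsto hlim2 (Filter.Eventually.of_forall fun j => hmem' (σ j))
      rcases hFc x0 hx0A with ⟨m, hm⟩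
      rcases (Metric.tendsto_atTop.1 hlim (c/4) (by positivity)) with ⟨N, hN⟩
      have h2 := hN N le_rfl
      simp only [Function.comp_apply] at h2
      rw [Real.dist_eq, hm] at h2
      linarith [hfar' (σ N) m]
    rcases h5a with ⟨δ, hδ0, h5a⟩
    -- Step 5b : Lipschitz bound
    have h5b : ∀ u v : ℝ, ((u, v) : ℝ × ℝ) ∈ A → |v| ≤ δ/2 →
        ∃ m : ℤ, |u - m*c| ≤ 2*c/δ * |v| := by
      intro u v hmemuv hv
      rcases eq_or_ne v 0 with rfl | hv0
      · rcases hFc u hmemuv with ⟨m, hm⟩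
        exact ⟨m, by simp [hm]⟩
      · have hav : 0 < |v| := abs_pos.2 hv0
        set Mn : ℕ := ⌊δ / |v|⌋₊ with hMn
        have hdv2 : (2:ℝ) ≤ δ / |v| := by
          rw [le_div_iff₀ hav]
          linarith
        have hM2 : (2:ℝ) ≤ (Mn:ℝ) := by
          have h2 : (2:ℕ) ≤ Mn := Nat.le_floor (by exact_mod_cast hdv2)
          exact_mod_cast h2
        have hMle : (Mn:ℝ) * |v| ≤ δ := by
          rw [← le_div_iff₀ hav]
          exact Nat.floor_le (by positivity)
        have hsm : ∀ m : ℕ, (((m:ℝ)*u, (m:ℝ)*v) : ℝ × ℝ) ∈ A := by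
          intro m
          have h := A.zsmul_mem hmemuv (m:ℤ)
          have heq : ((m:ℤ) • ((u, v) : ℝ × ℝ)) = (((m:ℝ)*u, (m:ℝ)*v) : ℝ × ℝ) := by
            rw [Prod.smul_mk, zsmul_eq_mul, zsmul_eq_mul, Prod.mk.injEq]
            constructor <;> push_cast <;> ring
          rwa [heq] at h
        rcases h5a u v hmemuv (by linarith) with ⟨m₀, hm₀⟩
        set e : ℝ := u - m₀*c with he
        have habse : 0 ≤ |e| := abs_nonneg e
        have claim : ∀ m : ℕ, (m:ℝ) + 1 ≤ (Mn:ℝ) → ((m:ℝ)+1) * |e| < c/4 := by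
          intro m
          induction m with
          | zero => intro _; simpa using hm₀
          | succ m ih =>
            intro hm1
            push_cast at hm1
            have ihh : ((m:ℝ)+1) * |e| < c/4 := ih (by linarith)
            have h1e : |e| ≤ ((m:ℝ)+1) * |e| := by
              refine le_mul_of_one_le_left habse ?_
              have := Nat.cast_nonneg (α := ℝ) m
              linarith
            have hmm : ((m:ℝ)+2) * |e| < c/2 := by
              have hexp : ((m:ℝ)+2)*|e| = ((m:ℝ)+1)*|e| + |e| := by ring
              linarith
            have hmemm := hsm (m+2)
            have hvm : |((m+2:ℕ):ℝ)*v| ≤ δ := by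
              rw [abs_mul, abs_of_nonneg (by positivity : (0:ℝ) ≤ ((m+2:ℕ):ℝ))]
              have hle2 : ((m+2:ℕ):ℝ) ≤ (Mn:ℝ) := by push_cast; linarith
              have h9 := mul_le_mul_of_nonneg_right hle2 (abs_nonneg v)
              linarith
            rcases h5a _ _ hmemm hvm with ⟨m₁, hm₁⟩
            set j : ℤ := (m+2 : ℕ) * m₀ - m₁ with hj
            have heq2 : ((m+2:ℕ):ℝ)*u - (m₁:ℝ)*c = ((m:ℝ)+2)*e + (j:ℝ)*c := by
              rw [he, hj]
              push_cast
              ring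
            rw [heq2] at hm₁
            have hj0 : j = 0 := by
              have h5 : (j:ℝ)*c = (((m:ℝ)+2)*e + (j:ℝ)*c) + (-(((m:ℝ)+2)*e)) := by ring
              have h4 := abs_add_le (((m:ℝ)+2)*e + (j:ℝ)*c) (-(((m:ℝ)+2)*e))
              rw [abs_neg] at h4
              have h3 : |(j:ℝ)*c| ≤ |((m:ℝ)+2)*e + (j:ℝ)*c| + |((m:ℝ)+2)*e| :=
                le_trans (le_of_eq (congrArg abs h5)) h4
              have h6 : |((m:ℝ)+2)*e| < c/2 := by
                rw [abs_mul, abs_of_nonneg (by positivity : (0:ℝ) ≤ (m:ℝ)+2)]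
                exact hmm
              have h7 : |(j:ℝ)| * c < (3/4) * c := by
                rw [abs_mul, abs_of_pos hc0] at h3
                linarith
              have h8 : |(j:ℝ)| < 1 := by
                have h9 := (mul_lt_mul_iff_left₀ hc0).1 h7
                linarith
              have h9 : |j| < 1 := by exact_mod_cast h8
              have h10 := abs_lt.1 h9
              omega
            rw [hj0] at hm₁
            simp only [Int.cast_zero, zero_mul, add_zero] at hm₁
            have h10 : |((m:ℝ)+2)*e| = ((m:ℝ)+2)*|e| := by
              rw [abs_mul, abs_of_nonneg (by positivity : (0:ℝ) ≤ (m:ℝ)+2)]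
            rw [h10] at hm₁
            push_cast
            calc ((m:ℝ)+1+1)*|e| = ((m:ℝ)+2)*|e| := by ring
            _ < c/4 := hm₁
        have hMnat : 2 ≤ Mn := by exact_mod_cast hM2
        have hcast : ((Mn - 1 : ℕ):ℝ) + 1 = (Mn:ℝ) := by
          have h1 : (1:ℕ) ≤ Mn := by omega
          push_cast [Nat.cast_sub h1]
          ring
        have hclaimM : (Mn:ℝ) * |e| < c/4 := by
          have h := claim (Mn - 1) (by rw [hcast])
          rwa [hcast] at h
        have hMge : δ / (2*|v|) ≤ (Mn:ℝ) := by
          have h1 := Nat.lt_floor_add_one (δ / |v|)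
          have h2 : δ / (2*|v|) = (δ / |v|)/2 := by
            rw [div_div]
            ring_nf
          rw [← hMn] at h1
          rw [h2]
          linarith
        refine ⟨m₀, ?_⟩
        have hMpos : (0:ℝ) < (Mn:ℝ) := by linarith
        have hv2 : δ/(2*(Mn:ℝ)) ≤ |v| := by
          rw [div_le_iff₀ (by positivity : (0:ℝ) < 2*(Mn:ℝ))]
          rw [div_le_iff₀ (by positivity : (0:ℝ) < 2*|v|)] at hMge
          nlinarith [hMge]
        have h6 : |e| ≤ c/(4*(Mn:ℝ)) := by
          rw [le_div_iff₀ (by positivity)]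
          calc |e| * (4*(Mn:ℝ)) = 4*((Mn:ℝ)*|e|) := by ring
          _ ≤ 4*(c/4) := by linarith
          _ = c := by ring
        have heq7 : 2*c/δ * (δ/(2*(Mn:ℝ))) = c/(Mn:ℝ) := by
          field_simp
        calc |e| ≤ c/(4*(Mn:ℝ)) := h6
        _ ≤ c/(Mn:ℝ) := by
            apply div_le_div_of_nonneg_left hc0.le hMpos
            linarith
        _ = 2*c/δ * (δ/(2*(Mn:ℝ))) := heq7.symm
        _ ≤ 2*c/δ * |v| := mul_le_mul_of_nonneg_left hv2 (by positivity)
    -- approximating sequence along the second axis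
    have hseq : ∀ j : ℕ, ∃ (η ξ : ℤ) (yv : ℝ), yv = γ*η + ξ ∧
        0 < yv ∧ yv ≤ δ/2 ∧ yv ≤ 1/(j+1) := by
      intro j
      set ε' : ℝ := min (δ/2) (1/((j:ℝ)+1)) with hε'
      have hε'1 : (0:ℝ) < 1/((j:ℝ)+1) := by positivity
      have hε'0 : 0 < ε' := lt_min (by linarith) hε'1
      rcases kron1 γ hγ (ε'/2) (ε'/4) (by positivity) with ⟨η, ξ, hd2⟩
      rw [abs_lt] at hd2
      have hl : ε' ≤ δ/2 := min_le_left _ _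
      have hr : ε' ≤ 1/((j:ℝ)+1) := min_le_right _ _
      exact ⟨η, ξ, γ*η + ξ, rfl, by linarith [hd2.1], by linarith [hd2.2], by linarith [hd2.2]⟩
    choose ηs ξs ys hyeq hypos hyδ hyle using hseq
    have hy0 : Tendsto ys atTop (𝓝 0) := by
      refine squeeze_zero_norm (fun j => ?_) tendsto_one_div_add_atTop_nhds_zero_nat
      rw [Real.norm_eq_abs, abs_of_pos (hypos j)]
      exact hyle j
    have hmemj : ∀ j, ((β*(ηs j), ys j) : ℝ × ℝ) ∈ A := by
      intro j
      have h := hGA (0, ξs j, ηs j)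
      have heq : ((((0:ℤ):ℝ) + β*((ηs j : ℤ):ℝ), ((ξs j : ℤ):ℝ) + γ*((ηs j:ℤ):ℝ)) : ℝ × ℝ)
          = ((β*(ηs j), ys j) : ℝ × ℝ) := by
        rw [Prod.mk.injEq]
        constructor
        · push_cast; ring
        · rw [hyeq j]; push_cast; ring
      rwa [heq] at h
    have h5bj : ∀ j, ∃ (m : ℤ) (tv : ℝ), β*(ηs j) - m*c = tv * ys j ∧ |tv| ≤ 2*c/δ := by
      intro j
      rcases h5b (β*(ηs j)) (ys j) (hmemj j)
        (by rw [abs_of_pos (hypos j)]; exact hyδ j) with ⟨m, hm⟩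
      rw [abs_of_pos (hypos j)] at hm
      refine ⟨m, (β*(ηs j) - m*c) / ys j, ?_, ?_⟩
      · exact (div_mul_cancel₀ _ (hypos j).ne').symm
      · rw [abs_div, abs_of_pos (hypos j), div_le_iff₀ (hypos j)]
        exact hm
    choose ms ts hts_eq hts_bd using h5bj
    have hts_bdd : ∀ j, ts j ∈ Icc (-(2*c/δ)) (2*c/δ) := fun j => abs_le.1 (hts_bd j)
    rcases (isCompact_Icc).tendsto_subseq hts_bdd with ⟨t, _, σ, hσ, hlimt⟩
    have mainstep : ∀ u v : ℝ, ((u, v) : ℝ × ℝ) ∈ A → ∃ Mm : ℤ, u - t*v = Mm*c := by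
      intro u v huv
      have key : ∀ j : ℕ, ∃ Mm : ℤ,
          |u - t*v - Mm*c| ≤ 4*c/δ * ys (σ j) + |ts (σ j) - t| * |v| := by
        intro j
        have hw0 : 0 < ys (σ j) := hypos (σ j)
        set n : ℤ := ⌊v / ys (σ j)⌋ with hn
        have hrem1 : 0 ≤ v - n*(ys (σ j)) := by
          rw [hn]
          exact Int.sub_floor_div_mul_nonneg _ hw0
        have hrem2 : v - n*(ys (σ j)) < ys (σ j) := by
          rw [hn]
          exact Int.sub_floor_div_mul_lt _ hw0
        have hmemh : ((u - n*(β*(ηs (σ j))), v - n*(ys (σ j))) : ℝ × ℝ) ∈ A := by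
          have h := A.sub_mem huv (A.zsmul_mem (hmemj (σ j)) n)
          have heq : ((u, v) : ℝ×ℝ) - n • ((β*(ηs (σ j)), ys (σ j)) : ℝ×ℝ)
              = ((u - n*(β*(ηs (σ j))), v - n*(ys (σ j))) : ℝ × ℝ) := by
            rw [Prod.smul_mk, zsmul_eq_mul, zsmul_eq_mul, Prod.mk_sub_mk]
          rwa [heq] at h
        have hvsmall : |v - n*(ys (σ j))| ≤ δ/2 := by
          rw [abs_of_nonneg hrem1]
          have hwd := hyδ (σ j)
          linarith
        rcases h5b _ _ hmemh hvsmall with ⟨m', hm'⟩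
        refine ⟨m' + n * ms (σ j), ?_⟩
        have heq3 : u - n*(β*(ηs (σ j))) - m'*c
            = (u - ts (σ j)*v - ((m' + n * ms (σ j) : ℤ):ℝ)*c) + ts (σ j) * (v - n*(ys (σ j))) := by
          have hb := hts_eq (σ j)
          push_cast
          linear_combination (-(n:ℝ)) * hb
        rw [heq3] at hm'
        have htsb : |ts (σ j)| ≤ 2*c/δ := hts_bd (σ j)
        have hvn : |v - n*(ys (σ j))| ≤ ys (σ j) := by
          rw [abs_of_nonneg hrem1]
          linarith
        have hcd : (0:ℝ) ≤ 2*c/δ := by positivity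
        have h3' : |(u - ts (σ j)*v - ((m' + n * ms (σ j) : ℤ):ℝ)*c) + ts (σ j) * (v - n*(ys (σ j)))|
            ≤ 2*c/δ * ys (σ j) :=
          le_trans hm' (mul_le_mul_of_nonneg_left hvn hcd)
        have h2' : |ts (σ j) * (v - n*(ys (σ j)))| ≤ 2*c/δ * ys (σ j) := by
          rw [abs_mul]
          exact mul_le_mul htsb hvn (abs_nonneg _) hcd
        have h5 : u - ts (σ j)*v - ((m' + n * ms (σ j) : ℤ):ℝ)*c
            = ((u - ts (σ j)*v - ((m' + n * ms (σ j) : ℤ):ℝ)*c) + ts (σ j) * (v - n*(ys (σ j))))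
              - ts (σ j) * (v - n*(ys (σ j))) := by ring
        have h1' : |u - ts (σ j)*v - ((m' + n * ms (σ j) : ℤ):ℝ)*c|
            ≤ 2*c/δ * ys (σ j) + 2*c/δ * ys (σ j) := by
          refine le_trans (le_of_eq (congrArg abs h5)) (le_trans (abs_sub _ _) ?_)
          exact add_le_add h3' h2'
        have hfinal : u - t*v - ((m' + n * ms (σ j) : ℤ):ℝ)*c
            = (u - ts (σ j)*v - ((m' + n * ms (σ j) : ℤ):ℝ)*c) + (ts (σ j) - t) * v := by ring
        have h4 := abs_add_le (u - ts (σ j)*v - ((m' + n * ms (σ j) : ℤ):ℝ)*c) ((ts (σ j) - t) * v)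
        have h6 : |(ts (σ j) - t) * v| = |ts (σ j) - t| * |v| := abs_mul _ _
        have h1'' : |u - ts (σ j)*v - ((m' + n * ms (σ j) : ℤ):ℝ)*c| ≤ 4*c/δ * ys (σ j) :=
          le_trans h1' (le_of_eq (by ring))
        refine le_trans (le_of_eq (congrArg abs hfinal)) (le_trans h4 ?_)
        rw [h6]
        exact add_le_add h1'' le_rfl
      choose Mms hMms using key
      have hE0 : Tendsto (fun j => 4*c/δ * ys (σ j) + |ts (σ j) - t| * |v|) atTop (𝓝 0) := by
        have h1 : Tendsto (fun j => ys (σ j)) atTop (𝓝 0) := hy0.comp hσ.tendsto_atTop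
        have h2 : Tendsto (fun j => ts (σ j) - t) atTop (𝓝 (t - t)) := hlimt.sub_const t
        rw [sub_self] at h2
        have h3 : Tendsto (fun j => |ts (σ j) - t|) atTop (𝓝 0) := by
          have h4 := h2.abs
          rwa [abs_zero] at h4
        have h4 := (h1.const_mul (4*c/δ)).add (h3.mul_const |v|)
        simpa using h4
      have hEev : ∀ᶠ j in atTop, 4*c/δ * ys (σ j) + |ts (σ j) - t| * |v| < c/2 :=
        hE0.eventually (gt_mem_nhds (by positivity))
      rcases eventually_atTop.1 hEev with ⟨N, hN⟩
      have hconst : ∀ j, N ≤ j → Mms j = Mms N := by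
        intro j hj
        have hEj := lt_of_le_of_lt (hMms j) (hN j hj)
        have hEN := lt_of_le_of_lt (hMms N) (hN N le_rfl)
        have h5 : ((Mms j : ℝ) - (Mms N : ℝ))*c
            = (u - t*v - (Mms N : ℝ)*c) - (u - t*v - (Mms j : ℝ)*c) := by ring
        have h4 := abs_sub (u - t*v - (Mms N : ℝ)*c) (u - t*v - (Mms j : ℝ)*c)
        have h3 : |((Mms j : ℝ) - (Mms N:ℝ))*c| < c :=
          lt_of_le_of_lt (le_trans (le_of_eq (congrArg abs h5)) h4) (by linarith)
        rw [abs_mul, abs_of_pos hc0] at h3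
        have h7 : |(Mms j : ℝ) - (Mms N:ℝ)| < 1 := by
          by_contra hcon7
          push_neg at hcon7
          have h8 := mul_le_mul_of_nonneg_right hcon7 hc0.le
          rw [one_mul] at h8
          linarith
        have h8 : |Mms j - Mms N| < 1 := by
          have h9 : |((Mms j - Mms N : ℤ):ℝ)| < 1 := by push_cast; exact h7
          exact_mod_cast h9
        have h10 := abs_lt.1 h8
        omega
      refine ⟨Mms N, ?_⟩
      have hle : |u - t*v - (Mms N : ℝ)*c| ≤ 0 := by
        apply ge_of_tendsto hE0
        rw [eventually_atTop]
        exact ⟨N, fun j hj => by rw [← hconst j hj]; exact hMms j⟩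
      have h9 := abs_nonneg (u - t*v - (Mms N : ℝ)*c)
      have h10 : u - t*v - (Mms N : ℝ)*c = 0 := by
        rw [← abs_eq_zero]
        linarith
      linarith
    obtain ⟨M₁, hM₁⟩ := mainstep 0 1 (by simpa using hGA (0, 1, 0))
    obtain ⟨M₂, hM₂⟩ := mainstep β γ (by simpa using hGA (0, 0, 1))
    have h1t : t = -((M₁:ℝ)*c) := by linarith
    have hrel : ((-M₂ : ℤ):ℝ) + ((K:ℤ):ℝ)*β + ((M₁:ℤ):ℝ)*γ = 0 := by
      push_cast
      linear_combination (K:ℝ)*hM₂ + ((M₂:ℝ) - (M₁:ℝ)*γ)*hK + (K:ℝ)*γ*h1t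
    exact hK0 (hind (-M₂) K M₁ hrel).1

lemma kron2large (β γ : ℝ)
    (hind : ∀ q₀ q₁ q₂ : ℤ, (q₀:ℝ) + (q₁:ℝ)*β + (q₂:ℝ)*γ = 0 → q₁ = 0 ∧ q₂ = 0)
    (x y ε : ℝ) (hε : 0 < ε) (n : ℕ) :
    ∃ τ ξ η : ℤ, (n:ℝ) + 1 ≤ (|τ| : ℝ) + (|ξ| : ℝ) + (|η| : ℝ) ∧
      |(τ:ℝ) + β*η - x| < ε ∧ |(ξ:ℝ) + γ*η - y| < ε := by
  obtain ⟨τ₀, ξ₀, η₀, h1, h2⟩ := kron2 β γ hind x y (ε/2) (by positivity)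
  set S₀ : ℤ := |τ₀| + |ξ₀| + |η₀| with hS₀
  have hS₀0 : 0 ≤ S₀ := by
    have := abs_nonneg τ₀; have := abs_nonneg ξ₀; have := abs_nonneg η₀
    omega
  set m : ℤ := (n:ℤ) + 1 + S₀ with hm
  have hm1 : 1 ≤ m := by
    have : (0:ℤ) ≤ (n:ℤ) := Int.natCast_nonneg n
    omega
  have hmR : (0:ℝ) < (m:ℝ) := by exact_mod_cast hm1.trans_lt' zero_lt_one
  set θ : ℝ := ε/(8*(m:ℝ)) with hθ
  have hθ0 : 0 < θ := by positivity
  obtain ⟨av, bv, ev, ha, hb⟩ := kron2 β γ hind (3*θ) 0 θ hθ0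
  rw [abs_lt] at ha
  have hv1lo : 2*θ < (av:ℝ) + β*ev := by linarith [ha.1]
  have hv1hi : (av:ℝ) + β*ev < 4*θ := by linarith [ha.2]
  have hv2 : |(bv:ℝ) + γ*ev| < θ := by simpa using hb
  have hcoords : 1 ≤ |av| + |bv| + |ev| := by
    by_contra hcon
    push_neg at hcon
    have hav : av = 0 ∧ bv = 0 ∧ ev = 0 := by
      have := abs_nonneg av; have := abs_nonneg bv; have := abs_nonneg ev
      constructor
      · rw [← abs_eq_zero]; omega
      constructor
      · rw [← abs_eq_zero]; omega
      · rw [← abs_eq_zero]; omega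
    rcases hav with ⟨rfl, rfl, rfl⟩
    simp at hv1lo
    linarith
  refine ⟨τ₀ + m*av, ξ₀ + m*bv, η₀ + m*ev, ?_, ?_, ?_⟩
  · -- size bound
    have key : (n:ℤ) + 1 ≤ |τ₀ + m*av| + |ξ₀ + m*bv| + |η₀ + m*ev| := by
      have t1 : |m*av| ≤ |τ₀ + m*av| + |τ₀| := by
        have h := abs_add_le (τ₀ + m*av) (-τ₀)
        simpa using h
      have t2 : |m*bv| ≤ |ξ₀ + m*bv| + |ξ₀| := by
        have h := abs_add_le (ξ₀ + m*bv) (-ξ₀)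
        simpa using h
      have t3 : |m*ev| ≤ |η₀ + m*ev| + |η₀| := by
        have h := abs_add_le (η₀ + m*ev) (-η₀)
        simpa using h
      have hmabs : |m| = m := abs_of_nonneg (by omega)
      rw [abs_mul, hmabs] at t1 t2 t3
      have h4 : m ≤ m * (|av| + |bv| + |ev|) := le_mul_of_one_le_right (by omega) hcoords
      have h5 : m * (|av| + |bv| + |ev|) = m*|av| + m*|bv| + m*|ev| := by ring
      omega
    have keyR : ((n:ℤ):ℝ) + 1 ≤ (|τ₀ + m*av| : ℤ) + ((|ξ₀ + m*bv| : ℤ):ℝ) + ((|η₀ + m*ev| : ℤ):ℝ) := by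
      exact_mod_cast key
    push_cast at keyR ⊢
    convert keyR using 2 <;> push_cast <;> ring
  · -- first coordinate error
    have heq : ((τ₀ + m*av : ℤ):ℝ) + β*((η₀ + m*ev : ℤ):ℝ) - x
        = ((τ₀:ℝ) + β*η₀ - x) + (m:ℝ)*((av:ℝ) + β*ev) := by
      push_cast
      ring
    rw [heq]
    have hB : |(m:ℝ)*((av:ℝ) + β*ev)| < ε/2 := by
      rw [abs_mul, abs_of_pos hmR]
      have habs : |(av:ℝ) + β*ev| < 4*θ := by
        rw [abs_lt]
        constructor <;> linarith
      have h6 : (m:ℝ) * |(av:ℝ) + β*ev| < (m:ℝ) * (4*θ) :=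
        mul_lt_mul_of_pos_left habs hmR
      have h7 : (m:ℝ) * (4*θ) = ε/2 := by
        rw [hθ]
        field_simp
        ring
      linarith
    calc |((τ₀:ℝ) + β*η₀ - x) + (m:ℝ)*((av:ℝ) + β*ev)|
        ≤ |(τ₀:ℝ) + β*η₀ - x| + |(m:ℝ)*((av:ℝ) + β*ev)| := abs_add_le _ _
    _ < ε/2 + ε/2 := add_lt_add h1 hB
    _ = ε := by ring
  · -- second coordinate error
    have heq : ((ξ₀ + m*bv : ℤ):ℝ) + γ*((η₀ + m*ev : ℤ):ℝ) - y
        = ((ξ₀:ℝ) + γ*η₀ - y) + (m:ℝ)*((bv:ℝ) + γ*ev) := by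
      push_cast
      ring
    rw [heq]
    have hB : |(m:ℝ)*((bv:ℝ) + γ*ev)| < ε/2 := by
      rw [abs_mul, abs_of_pos hmR]
      have h6 : (m:ℝ) * |(bv:ℝ) + γ*ev| < (m:ℝ) * θ := mul_lt_mul_of_pos_left hv2 hmR
      have h7 : (m:ℝ) * θ = ε/8 := by
        rw [hθ]
        field_simp
      linarith
    calc |((ξ₀:ℝ) + γ*η₀ - y) + (m:ℝ)*((bv:ℝ) + γ*ev)|
        ≤ |(ξ₀:ℝ) + γ*η₀ - y| + |(m:ℝ)*((bv:ℝ) + γ*ev)| := abs_add_le _ _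
    _ < ε/2 + ε/2 := add_lt_add h2 hB
    _ = ε := by ring

lemma dioph2_iff (a b lam : ℂ) :
    dioph2 a b lam ↔ ∃ n : ℕ, ∀ τ ξ η : ℤ,
      (n:ℝ) + 1 ≤ (|τ| : ℝ) + (|ξ| : ℝ) + (|η| : ℝ) →
      (1/((n:ℝ)+1)) * (((|τ| : ℝ) + (|ξ| : ℝ) + (|η| : ℝ)) ^ (-((n:ℝ)+1))) ≤
        ‖(τ : ℂ) + a * (ξ : ℂ) + b * (η : ℂ) - lam‖ := by
  constructor
  · rintro ⟨C, hC, M, hM, R, hR, h⟩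
    obtain ⟨n, hn⟩ : ∃ n : ℕ, max (max (1/C) M) R ≤ (n:ℝ)+1 := by
      obtain ⟨n, hn⟩ := exists_nat_ge (max (max (1/C) M) R)
      exact ⟨n, by linarith⟩
    refine ⟨n, fun τ ξ η hS => ?_⟩
    set S : ℝ := (|τ| : ℝ) + (|ξ| : ℝ) + (|η| : ℝ) with hSdef
    have hR' : R ≤ S := le_trans (le_trans (le_max_right _ _) hn) hS
    have hbound := h τ ξ η hR'
    have hS1 : (1:ℝ) ≤ S := by
      have h9 : (0:ℝ) ≤ (n:ℝ) := Nat.cast_nonneg n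
      linarith
    have hC' : 1/((n:ℝ)+1) ≤ C := by
      have h1 : 1/C ≤ (n:ℝ)+1 := le_trans (le_trans (le_max_left _ _) (le_max_left _ _)) hn
      rw [div_le_iff₀ hC] at h1
      rw [div_le_iff₀ (by positivity : (0:ℝ) < (n:ℝ)+1)]
      nlinarith
    have hexp : S ^ (-((n:ℝ)+1)) ≤ S ^ (-M) := by
      apply Real.rpow_le_rpow_of_exponent_le hS1
      have h9 : M ≤ (n:ℝ)+1 := le_trans (le_trans (le_max_right _ _) (le_max_left _ _)) hn
      linarith
    calc 1/((n:ℝ)+1) * S ^ (-((n:ℝ)+1)) ≤ C * S ^ (-M) := by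
          apply mul_le_mul hC' hexp (Real.rpow_nonneg (by linarith) _) (le_of_lt hC)
    _ ≤ _ := hbound
  · rintro ⟨n, hn⟩
    exact ⟨1/((n:ℝ)+1), by positivity, (n:ℝ)+1, by positivity, (n:ℝ)+1, by positivity,
      fun τ ξ η h => hn τ ξ η h⟩

lemma rat_mul_int (q : ℚ) (d : ℤ) (hd : (q.den : ℤ) ∣ d) :
    ∃ z : ℤ, (z:ℝ) = (q:ℝ) * (d:ℝ) := by
  obtain ⟨e, he⟩ := hd
  refine ⟨q.num * e, ?_⟩
  have hden : ((q.den:ℤ):ℝ) ≠ 0 := by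
    exact_mod_cast (Nat.cast_ne_zero (R := ℝ)).2 q.den_nz
  rw [he, Rat.cast_def]
  push_cast
  field_simp

lemma bridge (α₁ α₂ lam : ℂ) (h1 : α₁.im ≠ 0) (τ ξ η : ℤ) :
    (1/(1 + |α₁.re|/|α₁.im| + 1/|α₁.im|)) *
      (|(τ:ℝ) + (α₂.re - α₁.re*(α₂.im/α₁.im))*η - (lam.re - α₁.re*(lam.im/α₁.im))| +
       |(ξ:ℝ) + (α₂.im/α₁.im)*η - lam.im/α₁.im|)
      ≤ ‖(τ:ℂ) + α₁*(ξ:ℂ) + α₂*(η:ℂ) - lam‖ ∧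
    ‖(τ:ℂ) + α₁*(ξ:ℂ) + α₂*(η:ℂ) - lam‖
      ≤ (1 + |α₁.re| + |α₁.im|) *
      (|(τ:ℝ) + (α₂.re - α₁.re*(α₂.im/α₁.im))*η - (lam.re - α₁.re*(lam.im/α₁.im))| +
       |(ξ:ℝ) + (α₂.im/α₁.im)*η - lam.im/α₁.im|) := by
  have him0 : (0:ℝ) < |α₁.im| := abs_pos.2 h1
  set z : ℂ := (τ:ℂ) + α₁*(ξ:ℂ) + α₂*(η:ℂ) - lam with hz
  set u₁ : ℝ := (τ:ℝ) + (α₂.re - α₁.re*(α₂.im/α₁.im))*η - (lam.re - α₁.re*(lam.im/α₁.im))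
    with hu₁
  set u₂ : ℝ := (ξ:ℝ) + (α₂.im/α₁.im)*η - lam.im/α₁.im with hu₂
  have hre : z.re = (τ:ℝ) + α₁.re*ξ + α₂.re*η - lam.re := by
    rw [hz]
    simp [Complex.add_re, Complex.sub_re, Complex.mul_re]
  have him : z.im = α₁.im*ξ + α₂.im*η - lam.im := by
    rw [hz]
    simp [Complex.add_im, Complex.sub_im, Complex.mul_im]
  have hu2eq : u₂ = z.im / α₁.im := by
    rw [hu₂, him]
    field_simp
  have hu1eq : u₁ = z.re - α₁.re * (z.im / α₁.im) := by
    rw [hu₁, hre, him]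
    field_simp
    ring
  have habs_re : |z.re| ≤ ‖z‖ := Complex.abs_re_le_norm z
  have habs_im : |z.im| ≤ ‖z‖ := Complex.abs_im_le_norm z
  have habs0 : 0 ≤ ‖z‖ := norm_nonneg _
  have hu2b : |u₂| ≤ ‖z‖ / |α₁.im| := by
    rw [hu2eq, abs_div]
    gcongr
  have hu1b : |u₁| ≤ (1 + |α₁.re|/|α₁.im|) * ‖z‖ := by
    rw [hu1eq]
    have h3 := abs_add_le z.re (-(α₁.re * (z.im / α₁.im)))
    rw [abs_neg] at h3
    have h4 : |α₁.re * (z.im / α₁.im)| = |α₁.re| * (|z.im| / |α₁.im|) := by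
      rw [abs_mul, abs_div]
    have h5 : |α₁.re| * (|z.im| / |α₁.im|) ≤ |α₁.re| * (‖z‖ / |α₁.im|) := by
      gcongr
    calc |z.re - α₁.re * (z.im / α₁.im)| ≤ |z.re| + |α₁.re * (z.im / α₁.im)| := by
          have : z.re - α₁.re * (z.im / α₁.im) = z.re + (-(α₁.re * (z.im / α₁.im))) := by ring
          rw [this]; exact h3
    _ ≤ ‖z‖ + |α₁.re| * (‖z‖ / |α₁.im|) := by
          rw [h4]; exact add_le_add habs_re h5
    _ = (1 + |α₁.re|/|α₁.im|) * ‖z‖ := by ring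
  constructor
  · -- lower bound
    have hsum : |u₁| + |u₂| ≤ (1 + |α₁.re|/|α₁.im| + 1/|α₁.im|) * ‖z‖ := by
      have := add_le_add hu1b hu2b
      calc |u₁| + |u₂| ≤ (1 + |α₁.re|/|α₁.im|) * ‖z‖ + ‖z‖ / |α₁.im| :=
            this
      _ = (1 + |α₁.re|/|α₁.im| + 1/|α₁.im|) * ‖z‖ := by ring
    have hCpos : (0:ℝ) < 1 + |α₁.re|/|α₁.im| + 1/|α₁.im| := by positivity
    rw [div_mul_eq_mul_div, div_le_iff₀ hCpos, one_mul]
    calc |u₁| + |u₂| ≤ (1 + |α₁.re|/|α₁.im| + 1/|α₁.im|) * ‖z‖ := hsum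
    _ = ‖z‖ * (1 + |α₁.re|/|α₁.im| + 1/|α₁.im|) := by ring
  · -- upper bound
    have hzre : z.re = u₁ + α₁.re * u₂ := by
      rw [hu1eq, hu2eq]
      ring
    have hzim : |z.im| = |α₁.im| * |u₂| := by
      rw [hu2eq, abs_div]
      field_simp
    calc ‖z‖ ≤ |z.re| + |z.im| := Complex.norm_le_abs_re_add_abs_im z
    _ ≤ (|u₁| + |α₁.re| * |u₂|) + |α₁.im| * |u₂| := by
        apply add_le_add _ (le_of_eq hzim)
        rw [hzre]
        calc |u₁ + α₁.re * u₂| ≤ |u₁| + |α₁.re * u₂| := abs_add_le _ _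
        _ = |u₁| + |α₁.re| * |u₂| := by rw [abs_mul]
    _ ≤ (1 + |α₁.re| + |α₁.im|) * (|u₁| + |u₂|) := by
        have h6 := abs_nonneg u₁
        have h7 := abs_nonneg u₂
        have h8 := abs_nonneg α₁.re
        have h9 := abs_nonneg α₁.im
        nlinarith

/-- For `N = 2` and `Im α₁ ≠ 0`: `𝓜₂(α₁, α₂)` is a dense `G_δ` subset of `ℂ` iff the
three reals `1`, `Re α₂ − Re α₁ (Im α₂ / Im α₁)`, `Im α₂ / Im α₁` are linearly
independent over the rationals. -/
theorem stmt13 (α₁ α₂ : ℂ) (h1 : α₁.im ≠ 0) :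
    (Dense {lam : ℂ | ¬ dioph2 α₁ α₂ lam} ∧ IsGδ {lam : ℂ | ¬ dioph2 α₁ α₂ lam}) ↔
      (∀ r₀ r₁ r₂ : ℚ,
        (r₀ : ℝ) + (r₁ : ℝ) * (α₂.re - α₁.re * (α₂.im / α₁.im))
          + (r₂ : ℝ) * (α₂.im / α₁.im) = 0 →
        r₀ = 0 ∧ r₁ = 0 ∧ r₂ = 0) := by
  have him0 : (0:ℝ) < |α₁.im| := abs_pos.2 h1
  constructor
  · rintro ⟨hdense, -⟩ r₀ r₁ r₂ hrel
    by_cases h12 : r₁ = 0 ∧ r₂ = 0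
    · refine ⟨?_, h12.1, h12.2⟩
      rw [h12.1, h12.2] at hrel
      push_cast at hrel
      have h9 : (r₀:ℝ) = 0 := by linarith
      exact_mod_cast h9
    · exfalso
      set d : ℤ := (r₀.den : ℤ) * (r₁.den : ℤ) * (r₂.den : ℤ) with hd
      have hdpos : (0:ℤ) < d := by
        rw [hd]
        have d0 : (0:ℤ) < (r₀.den:ℤ) := by exact_mod_cast Nat.pos_of_ne_zero r₀.den_nz
        have d1 : (0:ℤ) < (r₁.den:ℤ) := by exact_mod_cast Nat.pos_of_ne_zero r₁.den_nz
        have d2 : (0:ℤ) < (r₂.den:ℤ) := by exact_mod_cast Nat.pos_of_ne_zero r₂.den_nz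
        positivity
      have hd0 : (d:ℝ) ≠ 0 := by
        have h9 : (0:ℝ) < (d:ℝ) := by exact_mod_cast hdpos
        linarith
      obtain ⟨p₀, hp₀⟩ := rat_mul_int r₀ d ⟨(r₁.den:ℤ)*(r₂.den:ℤ), by rw [hd]; ring⟩
      obtain ⟨p₁, hp₁⟩ := rat_mul_int r₁ d ⟨(r₀.den:ℤ)*(r₂.den:ℤ), by rw [hd]; ring⟩
      obtain ⟨p₂, hp₂⟩ := rat_mul_int r₂ d ⟨(r₀.den:ℤ)*(r₁.den:ℤ), by rw [hd]; ring⟩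
      have hrelZ : (p₀:ℝ) + (p₁:ℝ)*(α₂.re - α₁.re*(α₂.im/α₁.im))
          + (p₂:ℝ)*(α₂.im/α₁.im) = 0 := by
        rw [hp₀, hp₁, hp₂]
        linear_combination (d:ℝ) * hrel
      have hp12 : ¬(p₁ = 0 ∧ p₂ = 0) := by
        rintro ⟨ha', hb'⟩
        apply h12
        constructor
        · have h3 : (r₁:ℝ)*(d:ℝ) = 0 := by rw [← hp₁, ha']; simp
          rcases mul_eq_zero.1 h3 with h4 | h4
          · exact_mod_cast h4
          · exact absurd h4 hd0
        · have h3 : (r₂:ℝ)*(d:ℝ) = 0 := by rw [← hp₂, hb']; simp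
          rcases mul_eq_zero.1 h3 with h4 | h4
          · exact_mod_cast h4
          · exact absurd h4 hd0
      obtain ⟨s, w, hsw⟩ : ∃ s w : ℝ, (p₁:ℝ)*s + (p₂:ℝ)*w = 1/2 := by
        by_cases hp : p₁ = 0
        · have hp₂0 : p₂ ≠ 0 := fun h => hp12 ⟨hp, h⟩
          have h9 : ((p₂:ℝ)) ≠ 0 := Int.cast_ne_zero.2 hp₂0
          exact ⟨0, 1/(2*(p₂:ℝ)), by field_simp; ring⟩
        · have h9 : ((p₁:ℝ)) ≠ 0 := Int.cast_ne_zero.2 hp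
          exact ⟨1/(2*(p₁:ℝ)), 0, by field_simp; ring⟩
      set lam₀ : ℂ := ((s + α₁.re*w : ℝ) : ℂ) + ((α₁.im*w : ℝ) : ℂ)*Complex.I with hlam₀
      have hre₀ : lam₀.re = s + α₁.re*w := by simp [hlam₀]
      have him₀ : lam₀.im = α₁.im*w := by simp [hlam₀]
      set O : Set ℂ := (fun lam : ℂ =>
          (p₁:ℝ)*(lam.re - α₁.re*(lam.im/α₁.im)) + (p₂:ℝ)*(lam.im/α₁.im)) ⁻¹'
          (Ioo (1/4:ℝ) (3/4)) with hO
      have hOopen : IsOpen O := by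
        rw [hO]
        apply IsOpen.preimage ?_ isOpen_Ioo
        fun_prop
      have hmem₀ : lam₀ ∈ O := by
        rw [hO]
        simp only [Set.mem_preimage, hre₀, him₀]
        have hw : α₁.im*w/α₁.im = w := by field_simp
        rw [hw]
        have h9 : s + α₁.re*w - α₁.re*w = s := by ring
        rw [h9, hsw]
        norm_num
      obtain ⟨lam, hlamM, hlamO⟩ := hdense.exists_mem_open hOopen ⟨lam₀, hmem₀⟩
      apply hlamM
      have hΦIoo : (p₁:ℝ)*(lam.re - α₁.re*(lam.im/α₁.im)) + (p₂:ℝ)*(lam.im/α₁.im)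
          ∈ Ioo (1/4:ℝ) (3/4) := by
        have h9 := hlamO
        rw [hO] at h9
        exact h9
      set c₁ : ℝ := 1/(1 + |α₁.re|/|α₁.im| + 1/|α₁.im|) with hc₁
      have hc₁0 : 0 < c₁ := by rw [hc₁]; positivity
      set P : ℝ := |(p₁:ℝ)| + |(p₂:ℝ)| with hP
      have hP1 : (1:ℝ) ≤ P := by
        rw [hP]
        rcases not_and_or.1 hp12 with h6 | h6
        · have h7 : (1:ℤ) ≤ |p₁| := Int.one_le_abs (by omega)
          have h8 : (1:ℝ) ≤ |(p₁:ℝ)| := by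
            have h10 : ((|p₁|:ℤ):ℝ) = |(p₁:ℝ)| := by push_cast; ring
            rw [← h10]
            exact_mod_cast h7
          have h11 := abs_nonneg ((p₂:ℝ))
          linarith
        · have h7 : (1:ℤ) ≤ |p₂| := Int.one_le_abs (by omega)
          have h8 : (1:ℝ) ≤ |(p₂:ℝ)| := by
            have h10 : ((|p₂|:ℤ):ℝ) = |(p₂:ℝ)| := by push_cast; ring
            rw [← h10]
            exact_mod_cast h7
          have h11 := abs_nonneg ((p₁:ℝ))
          linarith
      have hP0 : (0:ℝ) < P := by linarith
      refine ⟨c₁/(4*P), by positivity, 1, one_pos, 1, one_pos, fun τ ξ η hS => ?_⟩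
      have hbr := (bridge α₁ α₂ lam h1 τ ξ η).1
      rw [← hc₁] at hbr
      have hint : (p₁:ℝ)*((τ:ℝ) + (α₂.re - α₁.re*(α₂.im/α₁.im))*η)
          + (p₂:ℝ)*((ξ:ℝ) + (α₂.im/α₁.im)*η) = ((p₁*τ + p₂*ξ - p₀*η : ℤ):ℝ) := by
        push_cast
        linear_combination (η:ℝ) * hrelZ
      set u₁ : ℝ := (τ:ℝ) + (α₂.re - α₁.re*(α₂.im/α₁.im))*η
        - (lam.re - α₁.re*(lam.im/α₁.im)) with hu₁
      set u₂ : ℝ := (ξ:ℝ) + (α₂.im/α₁.im)*η - lam.im/α₁.im with hu₂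
      set Φ : ℝ := (p₁:ℝ)*(lam.re - α₁.re*(lam.im/α₁.im)) + (p₂:ℝ)*(lam.im/α₁.im) with hΦ
      have hfar : ∀ zz : ℤ, (1:ℝ)/4 ≤ |(zz:ℝ) - Φ| := by
        intro zz
        rcases le_or_gt zz 0 with h6 | h6
        · rw [le_abs]
          right
          have h7 : (zz:ℝ) ≤ 0 := by exact_mod_cast h6
          have h8 := hΦIoo.1
          simp only [neg_sub]
          linarith
        · rw [le_abs]
          left
          have h7 : (1:ℝ) ≤ (zz:ℝ) := by exact_mod_cast h6
          have h8 := hΦIoo.2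
          linarith
      have hcomb : |(p₁:ℝ)*u₁ + (p₂:ℝ)*u₂| ≤ P * (|u₁| + |u₂|) := by
        have h6 := abs_add_le ((p₁:ℝ)*u₁) ((p₂:ℝ)*u₂)
        rw [abs_mul, abs_mul] at h6
        have n1 := abs_nonneg u₁
        have n2 := abs_nonneg u₂
        have n3 := abs_nonneg ((p₁:ℝ))
        have n4 := abs_nonneg ((p₂:ℝ))
        rw [hP]
        nlinarith [mul_nonneg n3 n2, mul_nonneg n4 n1]
      have hval : (p₁:ℝ)*u₁ + (p₂:ℝ)*u₂ = ((p₁*τ + p₂*ξ - p₀*η : ℤ):ℝ) - Φ := by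
        rw [hu₁, hu₂, hΦ]
        linear_combination hint
      have h6 : 1/4 ≤ P * (|u₁| + |u₂|) := by
        have h8 := hfar (p₁*τ + p₂*ξ - p₀*η)
        rw [← hval] at h8
        exact le_trans h8 hcomb
      have h7 : 1/(4*P) ≤ |u₁| + |u₂| := by
        rw [div_le_iff₀ (by positivity)]
        nlinarith
      have hchain : c₁/(4*P) ≤ ‖(τ:ℂ) + α₁*(ξ:ℂ) + α₂*(η:ℂ) - lam‖ := by
        calc c₁/(4*P) = c₁ * (1/(4*P)) := by ring
        _ ≤ c₁ * (|u₁| + |u₂|) := mul_le_mul_of_nonneg_left h7 hc₁0.le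
        _ ≤ _ := hbr
      have hS1 : (1:ℝ) ≤ (|τ|:ℝ)+(|ξ|:ℝ)+(|η|:ℝ) := hS
      have hrp : ((|τ|:ℝ)+(|ξ|:ℝ)+(|η|:ℝ)) ^ (-(1:ℝ)) ≤ 1 :=
        Real.rpow_le_one_of_one_le_of_nonpos hS1 (by norm_num)
      calc c₁/(4*P) * (((|τ|:ℝ)+(|ξ|:ℝ)+(|η|:ℝ)) ^ (-(1:ℝ)))
          ≤ c₁/(4*P) * 1 := mul_le_mul_of_nonneg_left hrp (by positivity)
      _ = c₁/(4*P) := mul_one _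
      _ ≤ _ := hchain
  · intro hQ
    have hindZ : ∀ q₀ q₁ q₂ : ℤ,
        (q₀:ℝ) + (q₁:ℝ)*(α₂.re - α₁.re*(α₂.im/α₁.im)) + (q₂:ℝ)*(α₂.im/α₁.im) = 0 →
        q₁ = 0 ∧ q₂ = 0 := by
      intro q₀ q₁ q₂ h
      have h5 := hQ (q₀:ℚ) (q₁:ℚ) (q₂:ℚ) (by push_cast; exact h)
      exact ⟨by exact_mod_cast h5.2.1, by exact_mod_cast h5.2.2⟩
    set U : ℕ → Set ℂ := fun n => ⋃ (τ : ℤ) (ξ : ℤ) (η : ℤ)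
        (_ : (n:ℝ) + 1 ≤ (|τ|:ℝ) + (|ξ|:ℝ) + (|η|:ℝ)),
        Metric.ball ((τ:ℂ) + α₁*(ξ:ℂ) + α₂*(η:ℂ))
          (1/((n:ℝ)+1) * (((|τ|:ℝ) + (|ξ|:ℝ) + (|η|:ℝ)) ^ (-((n:ℝ)+1)))) with hU
    have hUmem : ∀ (n : ℕ) (lam : ℂ), lam ∈ U n ↔ ∃ τ ξ η : ℤ,
        ((n:ℝ) + 1 ≤ (|τ|:ℝ) + (|ξ|:ℝ) + (|η|:ℝ)) ∧
        ‖(τ:ℂ) + α₁*(ξ:ℂ) + α₂*(η:ℂ) - lam‖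
          < 1/((n:ℝ)+1) * (((|τ|:ℝ) + (|ξ|:ℝ) + (|η|:ℝ)) ^ (-((n:ℝ)+1))) := by
      intro n lam
      rw [hU]
      simp only [Set.mem_iUnion, Metric.mem_ball, exists_prop]
      constructor
      · rintro ⟨τ, ξ, η, hc, hdist⟩
        refine ⟨τ, ξ, η, hc, ?_⟩
        rw [Complex.dist_eq, norm_sub_rev] at hdist
        exact hdist
      · rintro ⟨τ, ξ, η, hc, hdist⟩
        refine ⟨τ, ξ, η, hc, ?_⟩
        rw [Complex.dist_eq, norm_sub_rev]
        exact hdist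
    have hset : {lam : ℂ | ¬ dioph2 α₁ α₂ lam} = ⋂ n, U n := by
      ext lam
      simp only [Set.mem_setOf_eq, Set.mem_iInter]
      constructor
      · intro hnd n
        rw [hUmem]
        by_contra hcon
        push_neg at hcon
        exact hnd ((dioph2_iff α₁ α₂ lam).2 ⟨n, fun τ ξ η hS => hcon τ ξ η hS⟩)
      · intro hmem hdio
        obtain ⟨n, hn⟩ := (dioph2_iff α₁ α₂ lam).1 hdio
        obtain ⟨τ, ξ, η, hS, hlt⟩ := (hUmem n lam).1 (hmem n)
        exact absurd (hn τ ξ η hS) (not_le.2 hlt)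
    have hUopen : ∀ n, IsOpen (U n) := by
      intro n
      rw [hU]
      exact isOpen_iUnion fun τ => isOpen_iUnion fun ξ => isOpen_iUnion fun η =>
        isOpen_iUnion fun _ => Metric.isOpen_ball
    constructor
    · rw [hset]
      apply dense_iInter_of_isOpen hUopen
      intro n
      rw [Metric.dense_iff]
      intro lam r hr
      set c₂ : ℝ := 1 + |α₁.re| + |α₁.im| with hc₂
      have hc₂0 : 0 < c₂ := by rw [hc₂]; positivity
      obtain ⟨τ, ξ, η, hS, he1, he2⟩ := kron2large (α₂.re - α₁.re*(α₂.im/α₁.im))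
        (α₂.im/α₁.im) hindZ (lam.re - α₁.re*(lam.im/α₁.im)) (lam.im/α₁.im)
        (r/(2*c₂)) (by positivity) n
      refine ⟨(τ:ℂ) + α₁*(ξ:ℂ) + α₂*(η:ℂ), ?_, ?_⟩
      · rw [Metric.mem_ball, Complex.dist_eq]
        have hbr := (bridge α₁ α₂ lam h1 τ ξ η).2
        rw [← hc₂] at hbr
        calc ‖(τ:ℂ) + α₁*(ξ:ℂ) + α₂*(η:ℂ) - lam‖
            ≤ c₂ * (|(τ:ℝ) + (α₂.re - α₁.re*(α₂.im/α₁.im))*η - (lam.re - α₁.re*(lam.im/α₁.im))|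
              + |(ξ:ℝ) + (α₂.im/α₁.im)*η - lam.im/α₁.im|) := hbr
        _ < c₂ * (r/(2*c₂) + r/(2*c₂)) := by
            apply mul_lt_mul_of_pos_left (add_lt_add he1 he2) hc₂0
        _ = r := by field_simp; ring
      · rw [hUmem]
        refine ⟨τ, ξ, η, hS, ?_⟩
        simp only [sub_self, map_zero, norm_zero]
        have hSpos : (0:ℝ) < (|τ|:ℝ) + (|ξ|:ℝ) + (|η|:ℝ) :=
          lt_of_lt_of_le (by positivity) hS
        exact mul_pos (by positivity) (Real.rpow_pos_of_pos hSpos _)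
    · rw [hset]
      exact IsGδ.iInter_of_isOpen fun n => hUopen n
end

section
/- Let N ≥ 2, α = (α₁,…,α_N) ∈ ℂ^N, and suppose Im α_k ≠ 0 for some k while Im α_j = 0 for every j ≠ k. Then 𝓜_N(α) ⊆ ⋃_{m ∈ ℤ} t_m, where t_m = {z ∈ ℂ : Im z = m·Im α_k}; that is, if D(α,λ) fails then Im λ/Im α_k is an integer. -/
open Finset

/-- The Diophantine condition `D(α, λ)` for `N` coefficients `α = (α₁, …, α_N)`. -/
def dioph {N : ℕ} (α : Fin N → ℂ) (lam : ℂ) : Prop :=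
  ∃ C > (0 : ℝ), ∃ M > (0 : ℝ), ∃ R > (0 : ℝ),
    ∀ (τ : ℤ) (ξ : Fin N → ℤ), R ≤ (|τ| : ℝ) + ∑ j, (|ξ j| : ℝ) →
      C * (((|τ| : ℝ) + ∑ j, (|ξ j| : ℝ)) ^ (-M)) ≤
        ‖(τ : ℂ) + (∑ j, α j * (ξ j : ℂ)) - lam‖

/-- If `Im α_k ≠ 0` and `Im α_j = 0` for all `j ≠ k`, then `𝓜_N(α)` is contained in the
horizontal lines `t_m = {Im z = m Im α_k}`: whenever `D(α, λ)` fails, `Im λ` is an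
integer multiple of `Im α_k`. -/
theorem stmt14 (N : ℕ) (hN : 2 ≤ N) (α : Fin N → ℂ) (k : Fin N)
    (hk : (α k).im ≠ 0) (hj : ∀ j, j ≠ k → (α j).im = 0) :
    ∀ lam : ℂ, ¬ dioph α lam → ∃ m : ℤ, lam.im = (m : ℝ) * (α k).im := by
  intro lam hlam
  by_contra hm
  push_neg at hm
  apply hlam
  set a := (α k).im with ha
  set r := lam.im / a with hr
  have hra : r * a = lam.im := div_mul_cancel₀ _ hk
  have hround : r ≠ (round r : ℝ) := by
    intro h
    exact hm (round r) (by rw [← hra]; exact congrArg (· * a) h)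
  have hδ0 : 0 < |r - (round r : ℝ)| := abs_pos.2 (sub_ne_zero.2 hround)
  have hA : (0:ℝ) < |a| := abs_pos.2 hk
  refine ⟨|a| * |r - (round r : ℝ)|, by positivity, 1, one_pos, 1, one_pos, ?_⟩
  intro τ ξ hS
  set S : ℝ := (|τ| : ℝ) + ∑ j, (|ξ j| : ℝ) with hSdef
  have hS0 : (0:ℝ) < S := lt_of_lt_of_le one_pos hS
  have him : ((τ : ℂ) + (∑ j, α j * (ξ j : ℂ)) - lam).im = ((ξ k : ℝ) - r) * a := by
    have hsum : (∑ j, α j * (ξ j : ℂ)).im = (ξ k : ℝ) * a := by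
      rw [Complex.im_sum]
      rw [Finset.sum_eq_single k]
      · simp [Complex.mul_im, mul_comm, ha]
      · intro j _ hjk; simp [Complex.mul_im, hj j hjk]
      · simp
    simp [Complex.sub_im, Complex.add_im, hsum, ← hra]
    ring
  have h1 : |a| * |r - (round r : ℝ)| ≤ ‖(τ : ℂ) + (∑ j, α j * (ξ j : ℂ)) - lam‖ := by
    calc |a| * |r - (round r : ℝ)| ≤ |a| * |r - (ξ k : ℝ)| :=
          mul_le_mul_of_nonneg_left (round_le r (ξ k)) hA.le
      _ = |(ξ k : ℝ) - r| * |a| := by rw [abs_sub_comm]; ring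
      _ = |((ξ k : ℝ) - r) * a| := (abs_mul _ _).symm
      _ = |((τ : ℂ) + (∑ j, α j * (ξ j : ℂ)) - lam).im| := by rw [him]
      _ ≤ _ := Complex.abs_im_le_norm _
  calc |a| * |r - (round r : ℝ)| * S ^ (-(1:ℝ))
      ≤ |a| * |r - (round r : ℝ)| * 1 := by
        apply mul_le_mul_of_nonneg_left _ (by positivity)
        rw [Real.rpow_neg_one]
        exact inv_le_one_of_one_le₀ hS
    _ = |a| * |r - (round r : ℝ)| := mul_one _
    _ ≤ _ := h1
end

section
/- Let N ≥ 2, α = (α₁,…,α_N) ∈ ℂ^N with Im α_k ≠ 0 for some k, Im α_j = 0 for every j ≠ k, and α_j ∈ ℚ for every j ≠ k. Then for each m ∈ ℤ the set 𝓜_N(α) ∩ t_m, where t_m = {z ∈ ℂ : Im z = m·Im α_k}, is countable and discrete (every point of it is isolated in t_m). -/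
open Finset

lemma dioph_aux {N : ℕ} (α : Fin N → ℂ) (k : Fin N) (hk : (α k).im ≠ 0)
    (hj : ∀ j, j ≠ k → (α j).im = 0) (r : Fin N → ℚ) (hr : ∀ j, j ≠ k → α j = (r j : ℂ))
    (q : ℕ) (hqpos : 0 < q) (z : Fin N → ℤ) (hz : ∀ j, (q : ℚ) * r j = z j)
    (m : ℤ) (lam : ℂ) (him : lam.im = (m : ℝ) * (α k).im)
    (hno : ¬ ∃ t : ℤ, lam.re = (m : ℝ) * (α k).re + t / q) :
    dioph α lam := by
  have hqR : (0:ℝ) < q := by exact_mod_cast hqpos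
  set x : ℝ := lam.re - (m : ℝ) * (α k).re with hxdef
  have hx : ∀ t : ℤ, (q : ℝ) * x ≠ t := by
    intro t h
    apply hno
    exact ⟨t, by field_simp [hxdef] at h ⊢; linarith⟩
  set d : ℝ := |(q : ℝ) * x - round ((q : ℝ) * x)| with hddef
  have hd : 0 < d := abs_pos.mpr (sub_ne_zero.mpr (hx _))
  set C : ℝ := min (d / q) |(α k).im| with hCdef
  have hC : 0 < C := lt_min (div_pos hd hqR) (abs_pos.mpr hk)
  refine ⟨C, hC, 1, one_pos, 1, one_pos, ?_⟩
  intro τ ξ hs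
  set s : ℝ := (|τ| : ℝ) + ∑ j, (|ξ j| : ℝ) with hsdef
  have hs1 : (1:ℝ) ≤ s := hs
  have hstep : C * s ^ (-(1:ℝ)) ≤ C := by
    rw [Real.rpow_neg_one]
    calc C * s⁻¹ ≤ C * 1 := by
          exact mul_le_mul_of_nonneg_left (inv_le_one_of_one_le₀ hs1) hC.le
      _ = C := mul_one C
  refine hstep.trans ?_
  -- imaginary part
  have hsum_im : (∑ j, α j * (ξ j : ℂ)).im = (ξ k : ℝ) * (α k).im := by
    rw [Complex.im_sum]
    rw [Finset.sum_eq_single_of_mem k (mem_univ k)]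
    · simp [Complex.mul_im, mul_comm]
    · intro j _ hjk
      simp [Complex.mul_im, hj j hjk]
  have him' : ((τ : ℂ) + (∑ j, α j * (ξ j : ℂ)) - lam).im
      = ((ξ k : ℝ) - (m : ℝ)) * (α k).im := by
    simp [Complex.sub_im, Complex.add_im, hsum_im, him]
    ring
  by_cases hξk : ξ k = m
  · -- real case
    have him0 : ((τ : ℂ) + (∑ j, α j * (ξ j : ℂ)) - lam).im = 0 := by
      rw [him', hξk]; ring
    have hsum_re : (∑ j, α j * (ξ j : ℂ)).re
        = (m : ℝ) * (α k).re + ∑ j ∈ univ.erase k, ((r j : ℝ)) * (ξ j : ℝ) := by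
      rw [Complex.re_sum, ← Finset.add_sum_erase _ _ (mem_univ k)]
      congr 1
      · simp [Complex.mul_re, hξk, mul_comm]
      · apply Finset.sum_congr rfl
        intro j hjmem
        have hjk := Finset.ne_of_mem_erase hjmem
        rw [hr j hjk]
        simp [Complex.mul_re]
    set T : ℤ := q * τ + ∑ j ∈ univ.erase k, z j * ξ j with hTdef
    have hre : (q : ℝ) * ((τ : ℂ) + (∑ j, α j * (ξ j : ℂ)) - lam).re
        = (T : ℝ) - (q : ℝ) * x := by
      have hcast : ∀ j, ((q : ℝ)) * (r j : ℝ) = (z j : ℝ) := by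
        intro j
        have := hz j
        exact_mod_cast congrArg (fun a : ℚ => (a : ℝ)) this
      have : ((T : ℤ) : ℝ) = (q : ℝ) * (τ : ℝ)
          + ∑ j ∈ univ.erase k, (q : ℝ) * ((r j : ℝ)) * (ξ j : ℝ) := by
        rw [hTdef]
        push_cast
        refine congrArg _ (Finset.sum_congr rfl fun j _ => ?_)
        rw [hcast j]
      rw [this]
      simp only [Complex.sub_re, Complex.add_re, Complex.intCast_re, hsum_re, hxdef]
      have hms : (q : ℝ) * ∑ j ∈ univ.erase k, ((r j : ℝ)) * (ξ j : ℝ)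
          = ∑ j ∈ univ.erase k, (q : ℝ) * ((r j : ℝ)) * (ξ j : ℝ) := by
        rw [Finset.mul_sum]
        exact Finset.sum_congr rfl fun _ _ => (mul_assoc _ _ _).symm
      linear_combination hms
    have habs : d / q ≤ ‖(τ : ℂ) + (∑ j, α j * (ξ j : ℂ)) - lam‖ := by
      have h1 : d ≤ |(T : ℝ) - (q : ℝ) * x| := by
        rw [hddef, ← abs_neg ((T : ℝ) - (q : ℝ) * x), neg_sub]
        exact round_le ((q : ℝ) * x) T
      have h2 : |((τ : ℂ) + (∑ j, α j * (ξ j : ℂ)) - lam).re|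
          = |(T : ℝ) - (q : ℝ) * x| / q := by
        rw [← hre, abs_mul, abs_of_pos hqR, mul_comm, mul_div_assoc, div_self hqR.ne', mul_one]
      refine le_trans ?_ (Complex.abs_re_le_norm _)
      rw [h2]
      gcongr
    exact le_trans (min_le_left _ _) habs
  · -- imaginary part big
    have h1 : (1:ℝ) ≤ |(ξ k : ℝ) - (m : ℝ)| := by
      have hne : ξ k - m ≠ 0 := sub_ne_zero.mpr hξk
      have h := Int.one_le_abs hne
      have h' : ((1:ℤ):ℝ) ≤ ((|ξ k - m| : ℤ) : ℝ) := by exact_mod_cast h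
      rwa [Int.cast_abs, Int.cast_sub, Int.cast_one] at h'
    have : |(α k).im| ≤ ‖(τ : ℂ) + (∑ j, α j * (ξ j : ℂ)) - lam‖ := by
      calc |(α k).im| = 1 * |(α k).im| := (one_mul _).symm
        _ ≤ |(ξ k : ℝ) - (m : ℝ)| * |(α k).im| :=
            mul_le_mul_of_nonneg_right h1 (abs_nonneg _)
        _ = |((τ : ℂ) + (∑ j, α j * (ξ j : ℂ)) - lam).im| := by rw [him', abs_mul]
        _ ≤ _ := Complex.abs_im_le_norm _
    exact le_trans (min_le_right _ _) this

/-- If `Im α_k ≠ 0`, `Im α_j = 0` and `α_j ∈ ℚ` for all `j ≠ k`, then for each `m ∈ ℤ`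
the set `𝓜_N(α) ∩ t_m` (with `t_m = {Im z = m Im α_k}`) is countable and discrete:
each of its points is isolated in `t_m`. -/
theorem stmt15 (N : ℕ) (hN : 2 ≤ N) (α : Fin N → ℂ) (k : Fin N)
    (hk : (α k).im ≠ 0) (hj : ∀ j, j ≠ k → (α j).im = 0)
    (hrat : ∀ j, j ≠ k → ∃ r : ℚ, α j = (r : ℂ)) (m : ℤ) :
    Set.Countable {lam : ℂ | ¬ dioph α lam ∧ lam.im = (m : ℝ) * (α k).im} ∧
      ∀ lam ∈ {lam : ℂ | ¬ dioph α lam ∧ lam.im = (m : ℝ) * (α k).im},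
        ∃ ε > (0 : ℝ), ∀ z ∈ {lam : ℂ | ¬ dioph α lam ∧ lam.im = (m : ℝ) * (α k).im},
          ‖z - lam‖ < ε → z = lam := by
  classical
  -- choose rationals
  have hrat' : ∀ j : Fin N, ∃ r : ℚ, j ≠ k → α j = (r : ℂ) := by
    intro j
    by_cases h : j = k
    · exact ⟨0, fun h' => absurd h h'⟩
    · obtain ⟨r, hr⟩ := hrat j h; exact ⟨r, fun _ => hr⟩
  choose r hr using hrat'
  set q : ℕ := ∏ j, (r j).den with hq
  have hqpos : 0 < q := Finset.prod_pos (fun j _ => (r j).pos)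
  have hqR : (0:ℝ) < q := by exact_mod_cast hqpos
  have hz : ∀ j : Fin N, ∃ zj : ℤ, ((q:ℚ)) * r j = zj := by
    intro j
    obtain ⟨cj, hcj⟩ : ((r j).den : ℕ) ∣ q := Finset.dvd_prod_of_mem _ (mem_univ j)
    refine ⟨cj * (r j).num, ?_⟩
    have hne : ((r j).den : ℚ) ≠ 0 := by
      exact_mod_cast (r j).pos.ne'
    have hden : ((r j).den : ℚ) * r j = (r j).num := by
      have h0 : ((r j).num : ℚ) = r j * (r j).den :=
        (div_eq_iff hne).mp (Rat.num_div_den (r j))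
      linear_combination -h0
    calc ((q:ℚ)) * r j = (cj:ℚ) * (((r j).den : ℚ) * r j) := by
          rw [hcj]; push_cast; ring
      _ = ((cj * (r j).num : ℤ) : ℚ) := by rw [hden]; push_cast; ring
  choose z hz using hz
  -- membership forces the lattice
  have hmem : ∀ lam : ℂ, ¬ dioph α lam → lam.im = (m : ℝ) * (α k).im →
      ∃ t : ℤ, lam.re = (m : ℝ) * (α k).re + t / q := by
    intro lam hnd him
    by_contra hno
    exact hnd (dioph_aux α k hk hj r (fun j hjk => hr j hjk) q hqpos z hz m lam him hno)
  constructor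
  · -- countable
    apply Set.Countable.mono ?_
      (Set.countable_range fun t : ℤ =>
        (((m : ℝ) * (α k).re + t / q : ℝ) : ℂ) + ((m : ℝ) * (α k).im : ℝ) * Complex.I)
    rintro lam ⟨hnd, him⟩
    obtain ⟨t, ht⟩ := hmem lam hnd him
    refine ⟨t, ?_⟩
    apply Complex.ext
    · simp [ht]
    · simp [him]
  · -- discrete
    rintro lam ⟨hnd, him⟩
    refine ⟨1 / q, by positivity, ?_⟩
    rintro w ⟨hnd', him'⟩ hlt
    obtain ⟨t, ht⟩ := hmem lam hnd him
    obtain ⟨t', ht'⟩ := hmem w hnd' him'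
    have hre : (w - lam).re = ((t' - t : ℤ) : ℝ) / q := by
      simp [Complex.sub_re, ht, ht']
      push_cast
      ring
    have habs : |((t' - t : ℤ) : ℝ)| / q < 1 / q := by
      have h1 : |(w - lam).re| ≤ ‖w - lam‖ := Complex.abs_re_le_norm _
      rw [hre] at h1
      rw [abs_div, abs_of_pos hqR] at h1
      exact lt_of_le_of_lt h1 hlt
    have : |((t' - t : ℤ) : ℝ)| < 1 := by
      have := (div_lt_div_iff_of_pos_right hqR).mp habs
      exact this
    have htt : t' = t := by
      have h1 : |t' - t| < 1 := by exact_mod_cast this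
      have h2 := Int.abs_lt_one_iff.mp h1
      omega
    apply Complex.ext
    · rw [ht, ht', htt]
    · rw [him, him']
end

section
/- Let N ≥ 2, α = (α₁,…,α_N) ∈ ℂ^N with Im α_k ≠ 0 for some k, Im α_j = 0 for every j ≠ k, and suppose there exists j ≠ k with α_j ∈ ℝ\ℚ irrational. Then for each m ∈ ℤ the set 𝓜_N(α) ∩ t_m is dense in the horizontal line t_m = {z ∈ ℂ : Im z = m·Im α_k}. -/
open Finset

lemma aux_small (a : ℝ) (ha : Irrational a) {η : ℝ} (hη : 0 < η) :
    ∃ p q : ℤ, 1 ≤ q ∧ 0 < |(q : ℝ) * a - p| ∧ |(q : ℝ) * a - p| < η := by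
  obtain ⟨n, hn⟩ := exists_nat_gt (1 / η)
  obtain ⟨p, q, hq0, hqn, hpq⟩ := Real.exists_int_int_abs_mul_sub_le a (n := n + 1) (Nat.succ_pos n)
  refine ⟨p, q, hq0, ?_, ?_⟩
  · rw [abs_pos]
    intro h0
    have hq0' : (q : ℝ) ≠ 0 := by exact_mod_cast hq0.ne'
    have : a = (p : ℝ) / q := by field_simp; linarith [sub_eq_zero.mp h0]
    exact (irrational_iff_ne_rational a).mp ha p q (by omega) this
  · have h1 : (0:ℝ) < 1 / η := by positivity
    have hn0 : (0:ℝ) < n := lt_trans h1 hn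
    have : 1 / ((n:ℝ) + 1 + 1) < η := by
      rw [div_lt_iff₀ (by linarith)]
      rw [div_lt_iff₀ hη] at hn
      nlinarith
    calc |(q:ℝ) * a - p| ≤ 1 / ((n:ℝ) + 1 + 1) := by exact_mod_cast hpq
      _ < η := this

lemma aux_small_big (a : ℝ) (ha : Irrational a) (K : ℕ) {η : ℝ} (hη : 0 < η) :
    ∃ p q : ℤ, (K : ℤ) ≤ q ∧ 0 < |(q : ℝ) * a - p| ∧ |(q : ℝ) * a - p| < η := by
  obtain ⟨p, q, hq1, hpos, hlt⟩ := aux_small a ha (show (0:ℝ) < η / (K + 1) by positivity)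
  refine ⟨(K + 1) * p, (K + 1) * q, ?_, ?_, ?_⟩
  · have : (K : ℤ) + 1 ≤ (K + 1) * q := le_mul_of_one_le_right (by positivity) hq1
    omega
  · push_cast
    rw [show ((K:ℝ) + 1) * q * a - ((K:ℝ) + 1) * p = ((K:ℝ) + 1) * ((q : ℝ) * a - p) by ring,
      abs_mul]
    positivity
  · push_cast
    rw [show ((K:ℝ) + 1) * q * a - ((K:ℝ) + 1) * p = ((K:ℝ) + 1) * ((q : ℝ) * a - p) by ring,
      abs_mul, abs_of_pos (show (0:ℝ) < (K:ℝ)+1 by positivity)]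
    rw [lt_div_iff₀ (show (0:ℝ) < (K:ℝ)+1 by positivity)] at hlt
    linarith

lemma aux_approx (a : ℝ) (ha : Irrational a) (K : ℕ) (t : ℝ) {δ : ℝ} (hδ : 0 < δ) :
    ∃ P : ℤ × ℤ, (K : ℝ) ≤ |(P.2 : ℝ)| ∧ |(P.1 : ℝ) + P.2 * a - t| < δ := by
  obtain ⟨p₀, q₀, hq₀, hpos, hlt⟩ := aux_small a ha (show (0:ℝ) < δ / 4 by positivity)
  set h := (q₀ : ℝ) * a - p₀ with hh
  set n : ℤ := round (t / h)
  have hnh : |(n : ℝ) * h - t| < δ / 2 := by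
    have h0 : h ≠ 0 := by intro h0; rw [h0] at hpos; simp at hpos
    have := abs_sub_round (t / h)
    have h2 : |t / h - n| * |h| ≤ (1/2) * |h| := by
      apply mul_le_mul_of_nonneg_right this (abs_nonneg h)
    rw [← abs_mul, sub_mul, div_mul_cancel₀ _ h0] at h2
    rw [abs_sub_comm] at h2
    calc |(n:ℝ) * h - t| ≤ 1/2 * |h| := by rw [mul_comm (1/2:ℝ)] at h2; linarith [h2]
      _ < δ / 2 := by nlinarith
  obtain ⟨p₂, q₂, hq₂, _, hlt₂⟩ := aux_small_big a ha (K + (n * q₀).natAbs)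
    (show (0:ℝ) < δ / 2 by positivity)
  refine ⟨(-(n * p₀) + (-p₂), n * q₀ + q₂), ?_, ?_⟩
  · have h1 : (K : ℤ) + |n * q₀| ≤ q₂ := by
      have h := hq₂
      rwa [Nat.cast_add, Int.natCast_natAbs] at h
    have h2 : (K : ℤ) ≤ |n * q₀ + q₂| := by
      have h3 : (K:ℤ) ≤ n * q₀ + q₂ := by linarith [neg_abs_le (n*q₀)]
      exact le_trans h3 (le_abs_self _)
    calc (K : ℝ) ≤ ((|n * q₀ + q₂| : ℤ) : ℝ) := by exact_mod_cast h2
      _ = |((n * q₀ + q₂ : ℤ) : ℝ)| := by push_cast; simp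
  · have expand : ((-(n * p₀) + (-p₂) : ℤ) : ℝ) + ((n * q₀ + q₂ : ℤ) : ℝ) * a - t
        = ((n : ℝ) * h - t) + ((q₂ : ℝ) * a - p₂) := by push_cast [hh]; ring
    rw [expand]
    calc |((n : ℝ) * h - t) + ((q₂ : ℝ) * a - p₂)| ≤ |(n : ℝ) * h - t| + |(q₂ : ℝ) * a - p₂| :=
        abs_add_le _ _
      _ < δ / 2 + δ / 2 := by gcongr
      _ = δ := by ring


/-- If `Im α_k ≠ 0`, `Im α_j = 0` for all `j ≠ k`, and some `α_j` (`j ≠ k`) is an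
irrational real, then for each `m ∈ ℤ` the set `𝓜_N(α) ∩ t_m` is dense in the line
`t_m = {Im z = m Im α_k}`. -/
theorem stmt16 (N : ℕ) (hN : 2 ≤ N) (α : Fin N → ℂ) (k : Fin N)
    (hk : (α k).im ≠ 0) (hj : ∀ j, j ≠ k → (α j).im = 0)
    (j₀ : Fin N) (hj₀ : j₀ ≠ k) (hirr : Irrational (α j₀).re) (m : ℤ) :
    ∀ x : ℂ, x.im = (m : ℝ) * (α k).im → ∀ ε > (0 : ℝ),
      ∃ lam : ℂ, ¬ dioph α lam ∧ lam.im = (m : ℝ) * (α k).im ∧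
        ‖lam - x‖ < ε := by
  intro x hx ε hε
  set a := (α j₀).re with ha_def
  have haj : α j₀ = (a : ℂ) := by
    apply Complex.ext
    · simp [ha_def]
    · simp [hj j₀ hj₀]
  have L3 : ∀ (K : ℕ) (t δ : ℝ), 0 < δ →
      ∃ P : ℤ × ℤ, (K : ℝ) ≤ |(P.2 : ℝ)| ∧ |(P.1 : ℝ) + P.2 * a - t| < δ :=
    fun K t δ h => aux_approx a hirr K t h
  choose F hF1 hF2 using L3
  set t₀ := x.re - (m : ℝ) * (α k).re with ht₀
  set S : ℤ × ℤ → ℝ := fun P => ((|P.1| : ℤ) : ℝ) + ((|P.2| : ℤ) : ℝ) + ((|m| : ℤ) : ℝ)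
    with hS_def
  have hSnn : ∀ P, 0 ≤ S P := by
    intro P
    simp only [hS_def]
    positivity
  set d : ℕ → ℤ × ℤ → ℝ :=
    fun n P => min (ε / 2 ^ (n + 4)) (1 / ((S P + 1) ^ (n + 1) * 2 ^ (n + 1))) with hd_def
  have hdpos : ∀ n P, 0 < d n P := by
    intro n P
    have h1 : (0:ℝ) ≤ S P := hSnn P
    simp only [hd_def]
    apply lt_min
    · positivity
    · exact div_pos one_pos (mul_pos (pow_pos (by linarith) _) (pow_pos two_pos _))
  have he4 : (0:ℝ) < ε / 4 := by positivity
  obtain ⟨g, hg0, hgs⟩ : ∃ g : ℕ → ℤ × ℤ, g 0 = F 1 t₀ (ε/4) he4 ∧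
      ∀ n, g (n+1) = F ((|(g n).1| + |(g n).2| + |m|).toNat + 1)
        (((g n).1 : ℝ) + ((g n).2 : ℝ) * a) (d n (g n)) (hdpos n (g n)) :=
    ⟨fun n => Nat.rec (F 1 t₀ (ε/4) he4)
      (fun n P => F ((|P.1| + |P.2| + |m|).toNat + 1)
        ((P.1 : ℝ) + (P.2 : ℝ) * a) (d n P) (hdpos n P)) n, rfl, fun n => rfl⟩
  set T : ℕ → ℝ := fun n => ((g n).1 : ℝ) + ((g n).2 : ℝ) * a with hT_def
  have hT : ∀ n, |T (n+1) - T n| < d n (g n) := by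
    intro n
    have h2 := hF2 ((|(g n).1| + |(g n).2| + |m|).toNat + 1)
      (((g n).1 : ℝ) + ((g n).2 : ℝ) * a) (d n (g n)) (hdpos n (g n))
    rw [← hgs n] at h2
    simpa only [hT_def] using h2
  have hcast : ∀ P : ℤ × ℤ, (((|P.1| + |P.2| + |m|).toNat : ℝ)) = S P := by
    intro P
    have hnn : (0:ℤ) ≤ |P.1| + |P.2| + |m| := by positivity
    have h2 : ((|P.1| + |P.2| + |m|).toNat : ℤ) = |P.1| + |P.2| + |m| := Int.toNat_of_nonneg hnn
    simp only [hS_def]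
    exact_mod_cast congrArg (Int.cast : ℤ → ℝ) h2
  have habs2 : ∀ n, |((g n).2 : ℝ)| ≤ S (g n) := by
    intro n
    simp only [hS_def]
    push_cast
    have h1 := abs_nonneg ((g n).1 : ℝ)
    have h2 := abs_nonneg ((m : ℤ) : ℝ)
    push_cast at h1 h2
    linarith
  have hSmono1 : ∀ n, S (g n) + 1 ≤ S (g (n+1)) := by
    intro n
    have h1 := hF1 ((|(g n).1| + |(g n).2| + |m|).toNat + 1)
      (((g n).1 : ℝ) + ((g n).2 : ℝ) * a) (d n (g n)) (hdpos n (g n))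
    rw [← hgs n] at h1
    push_cast at h1
    rw [hcast (g n)] at h1
    exact le_trans h1 (habs2 (n+1))
  have hS0 : (1:ℝ) ≤ S (g 0) := by
    have h1 := hF1 1 t₀ (ε/4) he4
    rw [← hg0] at h1
    push_cast at h1
    exact le_trans h1 (habs2 0)
  have hSn : ∀ n : ℕ, (n : ℝ) + 1 ≤ S (g n) := by
    intro n
    induction n with
    | zero => simpa using hS0
    | succ n ih =>
      have := hSmono1 n
      push_cast
      linarith
  have hSmono : ∀ j i : ℕ, S (g j) ≤ S (g (j + i)) := by
    intro j i
    induction i with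
    | zero => simp
    | succ i ih =>
      have := hSmono1 (j + i)
      have e : j + (i + 1) = (j + i) + 1 := by omega
      rw [e]
      linarith
  -- Cauchy sequence
  have hgeo : ∀ n, dist (T n) (T (n+1)) ≤ (ε/16) * (1/2) ^ n := by
    intro n
    rw [Real.dist_eq, abs_sub_comm]
    have h1 := (hT n).le
    have h2 : d n (g n) ≤ ε / 2 ^ (n + 4) := by
      simp only [hd_def]; exact min_le_left _ _
    have h3 : ε / 2 ^ (n + 4) = ε / 16 * (1/2) ^ n := by
      rw [pow_add, div_pow, one_pow, div_mul_div_comm, mul_one]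
      norm_num
      ring
    linarith
  have hc : CauchySeq T := cauchySeq_of_le_geometric (1/2) (ε/16) (by norm_num) hgeo
  obtain ⟨t, ht⟩ := cauchySeq_tendsto_of_complete hc
  -- key bound: |t - T j| ≤ 1 / (S (g j))^(j+1)
  have key : ∀ jj : ℕ, |t - T jj| ≤ 1 / (S (g jj)) ^ (jj + 1) := by
    intro jj
    have hSj1 : (1:ℝ) ≤ S (g jj) := by
      have := hSn jj
      have h0 : (0:ℝ) ≤ (jj : ℝ) := Nat.cast_nonneg jj
      linarith
    set B := 1 / (S (g jj)) ^ (jj + 1) with hB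
    have hBnn : 0 ≤ B := by rw [hB]; positivity
    have claim : ∀ i, |T (jj + i) - T jj| ≤ B * (1 - (1/2) ^ i) := by
      intro i
      induction i with
      | zero => simp
      | succ i ih =>
        have hstep := (hT (jj + i)).le
        have hd2 : d (jj + i) (g (jj + i)) ≤ B * (1/2) ^ (i + 1) := by
          have h1 : d (jj + i) (g (jj + i)) ≤
              1 / ((S (g (jj + i)) + 1) ^ (jj + i + 1) * 2 ^ (jj + i + 1)) := by
            simp only [hd_def]; exact min_le_right _ _
          have hmono := hSmono jj i
          have hbig : (S (g jj)) ^ (jj + 1) * 2 ^ (i + 1) ≤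
              (S (g (jj + i)) + 1) ^ (jj + i + 1) * 2 ^ (jj + i + 1) := by
            have e1 : (S (g jj)) ^ (jj + 1) ≤ (S (g (jj + i)) + 1) ^ (jj + i + 1) := by
              calc (S (g jj)) ^ (jj + 1) ≤ (S (g (jj + i)) + 1) ^ (jj + 1) := by
                    apply pow_le_pow_left₀ (by linarith) (by linarith)
                _ ≤ (S (g (jj + i)) + 1) ^ (jj + i + 1) := by
                    apply pow_le_pow_right₀ (by linarith) (by omega)
            have e2 : (2:ℝ) ^ (i + 1) ≤ 2 ^ (jj + i + 1) := by
              apply pow_le_pow_right₀ one_le_two (by omega)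
            exact mul_le_mul e1 e2 (by positivity) (by positivity)
          calc d (jj + i) (g (jj + i)) ≤
              1 / ((S (g (jj + i)) + 1) ^ (jj + i + 1) * 2 ^ (jj + i + 1)) := h1
            _ ≤ 1 / ((S (g jj)) ^ (jj + 1) * 2 ^ (i + 1)) := by
                apply one_div_le_one_div_of_le (by positivity) hbig
            _ = B * (1/2) ^ (i + 1) := by
                rw [hB, div_pow, one_pow]
                field_simp
        have tri : |T (jj + (i + 1)) - T jj| ≤
            |T (jj + i + 1) - T (jj + i)| + |T (jj + i) - T jj| := by
          have e : jj + (i + 1) = (jj + i) + 1 := by omega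
          rw [e]
          exact abs_sub_le _ _ _
        have : |T (jj + (i+1)) - T jj| ≤ B * (1/2) ^ (i + 1) + B * (1 - (1/2) ^ i) := by
          have := le_trans hstep hd2
          linarith [tri]
        calc |T (jj + (i+1)) - T jj| ≤ B * (1/2) ^ (i + 1) + B * (1 - (1/2) ^ i) := this
          _ = B * (1 - (1/2) ^ (i + 1)) := by ring
    have htend : Filter.Tendsto (fun i => |T (jj + i) - T jj|) Filter.atTop (nhds |t - T jj|) := by
      have h1 : Filter.Tendsto (fun i => T (jj + i)) Filter.atTop (nhds t) := by
        have h2 := ht.comp (Filter.tendsto_add_atTop_nat jj)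
        simpa [Function.comp_def, add_comm] using h2
      exact (h1.sub tendsto_const_nhds).abs
    refine le_of_tendsto htend (Filter.Eventually.of_forall fun i => ?_)
    calc |T (jj + i) - T jj| ≤ B * (1 - (1/2) ^ i) := claim i
      _ ≤ B := by nlinarith [pow_nonneg (by norm_num : (0:ℝ) ≤ 1/2) i]
  -- epsilon bound
  have claim0 : ∀ n, |T n - T 0| ≤ ε/8 * (1 - (1/2) ^ n) := by
    intro n
    induction n with
    | zero => simp
    | succ n ih =>
      have hstep := (hT n).le
      have h2 : d n (g n) ≤ ε / 2 ^ (n + 4) := by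
        simp only [hd_def]; exact min_le_left _ _
      have h3 : ε / 2 ^ (n + 4) = ε/8 * (1/2) ^ (n + 1) := by
        rw [show n + 4 = (n+1) + 3 by omega, pow_add, div_pow, one_pow, div_mul_div_comm, mul_one]
        norm_num
        ring
      have tri : |T (n + 1) - T 0| ≤ |T (n + 1) - T n| + |T n - T 0| := abs_sub_le _ _ _
      have : |T (n+1) - T 0| ≤ ε/8 * (1/2) ^ (n + 1) + ε/8 * (1 - (1/2) ^ n) := by
        rw [← h3]
        linarith
      calc |T (n+1) - T 0| ≤ ε/8 * (1/2) ^ (n + 1) + ε/8 * (1 - (1/2) ^ n) := this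
        _ = ε/8 * (1 - (1/2) ^ (n+1)) := by ring
  have ht0 : |t - T 0| ≤ ε/8 := by
    have htend : Filter.Tendsto (fun n => |T n - T 0|) Filter.atTop (nhds |t - T 0|) :=
      (ht.sub tendsto_const_nhds).abs
    refine le_of_tendsto htend (Filter.Eventually.of_forall fun n => ?_)
    calc |T n - T 0| ≤ ε/8 * (1 - (1/2) ^ n) := claim0 n
      _ ≤ ε/8 := by nlinarith [pow_nonneg (by norm_num : (0:ℝ) ≤ 1/2) n, hε]
  have hT0t₀ : |T 0 - t₀| < ε/4 := by
    have h2 := hF2 1 t₀ (ε/4) he4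
    rw [← hg0] at h2
    simpa only [hT_def] using h2
  have htt₀ : |t - t₀| < ε/2 := by
    have := abs_sub_le t (T 0) t₀
    linarith
  refine ⟨(t : ℂ) + (m : ℂ) * α k, ?_, ?_, ?_⟩
  · -- not dioph
    rintro ⟨C, hC, M, hM, R, hR, H⟩
    obtain ⟨n₀, hn₀⟩ := exists_nat_gt (max (max R M) (M + Real.logb 2 (8/C)))
    have hn₀R : R < (n₀ : ℝ) := lt_of_le_of_lt (le_trans (le_max_left R M) (le_max_left _ _)) hn₀
    have hn₀M : M < (n₀ : ℝ) := lt_of_le_of_lt (le_trans (le_max_right R M) (le_max_left _ _)) hn₀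
    have hn₀L : M + Real.logb 2 (8/C) < (n₀ : ℝ) := lt_of_le_of_lt (le_max_right _ _) hn₀
    set jj := n₀ with hjj
    set q := (g jj).2 with hq
    set τ := (g jj).1 with hτ
    set ξ : Fin N → ℤ := fun i => if i = j₀ then q else if i = k then m else 0 with hξ
    have sum_two : ∀ {β : Type} [inst : AddCommMonoid β] (f : Fin N → β),
        (∀ i, i ≠ j₀ → i ≠ k → f i = 0) → ∑ i, f i = f j₀ + f k := by
      intro β _ f h0
      rw [← Finset.sum_pair hj₀]
      refine (Finset.sum_subset (Finset.subset_univ _) fun i _ hi => ?_).symm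
      simp only [Finset.mem_insert, Finset.mem_singleton] at hi
      push_neg at hi
      exact h0 i hi.1 hi.2
    have hξj₀ : ξ j₀ = q := by simp only [hξ, if_pos rfl]
    have hξk : ξ k = m := by
      simp only [hξ]
      rw [if_neg (Ne.symm hj₀)]
      simp
    have hsum1 : ∑ i, |((ξ i : ℤ) : ℝ)| = |((q : ℤ) : ℝ)| + |((m : ℤ) : ℝ)| := by
      rw [sum_two (fun i => |((ξ i : ℤ) : ℝ)|) ?_ , hξj₀, hξk]
      intro i h1 h2
      simp only [hξ, if_neg h1, if_neg h2]
      simp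
    have hsum2 : ∑ i, α i * ((ξ i : ℤ) : ℂ) = α j₀ * (q : ℂ) + α k * (m : ℂ) := by
      rw [sum_two (fun i => α i * ((ξ i : ℤ) : ℂ)) ?_ , hξj₀, hξk]
      intro i h1 h2
      simp only [hξ, if_neg h1, if_neg h2]
      simp
    have hsz : |((τ : ℤ) : ℝ)| + ∑ i, |((ξ i : ℤ) : ℝ)| = S (g jj) := by
      rw [hsum1]
      simp only [hS_def, hq, hτ]
      push_cast
      ring
    have hSjn : (jj : ℝ) + 1 ≤ S (g jj) := hSn jj
    have hsize : R ≤ |((τ : ℤ) : ℝ)| + ∑ i, |((ξ i : ℤ) : ℝ)| := by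
      rw [hsz]
      linarith
    have happ := H τ ξ hsize
    rw [hsz] at happ
    have hval : (τ : ℂ) + (∑ i, α i * ((ξ i : ℤ) : ℂ)) - ((t : ℂ) + (m : ℂ) * α k)
        = ((T jj - t : ℝ) : ℂ) := by
      rw [hsum2, haj]
      simp only [hT_def, hq, hτ]
      push_cast
      ring
    rw [hval, Complex.norm_real, Real.norm_eq_abs] at happ
    have hkey := key jj
    rw [abs_sub_comm] at hkey
    have hC2 : C * (S (g jj)) ^ (-M) ≤ 1 / (S (g jj)) ^ (jj + 1) := le_trans happ hkey
    set Sj := S (g jj) with hSj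
    have hSj2 : (2:ℝ) ≤ Sj := by
      have h1 : (1:ℝ) ≤ (n₀ : ℝ) := by
        have : (0:ℝ) < (n₀ : ℝ) := lt_trans hR hn₀R
        exact_mod_cast this
      have : (jj : ℝ) = (n₀ : ℝ) := by rw [hjj]
      linarith [hSjn]
    have hSjpos : (0:ℝ) < Sj := by linarith
    have e1 : 1 / Sj ^ (jj + 1) = Sj ^ (-((jj : ℝ) + 1)) := by
      rw [Real.rpow_neg hSjpos.le,
        show ((jj:ℝ) + 1) = ((jj + 1 : ℕ) : ℝ) by push_cast; ring,
        Real.rpow_natCast, one_div]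
    set dd := (jj : ℝ) + 1 - M with hdd_def
    have hdd1 : 1 + Real.logb 2 (8/C) < dd := by
      rw [hdd_def]
      have : (jj : ℝ) = (n₀ : ℝ) := by rw [hjj]
      linarith
    have hdd0 : (0:ℝ) < dd := by
      rw [hdd_def]
      have : (jj : ℝ) = (n₀ : ℝ) := by rw [hjj]
      linarith
    have hmain : C ≤ Sj ^ (-dd) := by
      have h3 : C * Sj ^ (-M) * Sj ^ M ≤ Sj ^ (-((jj:ℝ) + 1)) * Sj ^ M := by
        rw [← e1]
        exact mul_le_mul_of_nonneg_right hC2 (Real.rpow_nonneg hSjpos.le M)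
      rw [mul_assoc, ← Real.rpow_add hSjpos, neg_add_cancel, Real.rpow_zero, mul_one] at h3
      rw [← Real.rpow_add hSjpos] at h3
      have : -((jj:ℝ) + 1) + M = -dd := by rw [hdd_def]; ring
      rwa [this] at h3
    have hfin : Sj ^ (-dd) ≤ (2:ℝ) ^ (-dd) := by
      rw [Real.rpow_neg hSjpos.le, Real.rpow_neg (by norm_num : (0:ℝ) ≤ 2)]
      have h1 : (2:ℝ) ^ dd ≤ Sj ^ dd := Real.rpow_le_rpow (by norm_num) hSj2 hdd0.le
      have h2 : (0:ℝ) < (2:ℝ) ^ dd := Real.rpow_pos_of_pos (by norm_num) dd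
      exact inv_anti₀ h2 h1
    have h2dd : (8:ℝ)/C < (2:ℝ) ^ dd := by
      have hbc : (0:ℝ) < 8/C := by positivity
      have h1 : (2:ℝ) ^ (Real.logb 2 (8/C)) = 8/C := Real.rpow_logb two_pos (by norm_num) hbc
      calc (8:ℝ)/C = 2 ^ (Real.logb 2 (8/C)) := h1.symm
        _ < 2 ^ dd := by
            apply Real.rpow_lt_rpow_left_iff (by norm_num : (1:ℝ) < 2) |>.mpr
            linarith
    have hlast : (2:ℝ) ^ (-dd) < C/8 := by
      rw [Real.rpow_neg (by norm_num : (0:ℝ) ≤ 2)]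
      rw [inv_lt_comm₀ (Real.rpow_pos_of_pos (by norm_num) dd) (by positivity)]
      calc (C/8)⁻¹ = 8/C := by field_simp
        _ < 2 ^ dd := h2dd
    linarith [le_trans hmain hfin]
  · -- imaginary part
    simp [Complex.add_im, Complex.mul_im]
  · -- distance
    have hdiff : ((t : ℂ) + (m : ℂ) * α k) - x = ((t - t₀ : ℝ) : ℂ) := by
      apply Complex.ext
      · simp only [Complex.sub_re, Complex.add_re, Complex.ofReal_re, Complex.mul_re,
          Complex.intCast_re, Complex.intCast_im, ht₀]
        ring
      · simp only [Complex.sub_im, Complex.add_im, Complex.ofReal_im, Complex.mul_im,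
          Complex.intCast_re, Complex.intCast_im, hx]
        ring
    rw [hdiff, Complex.norm_real, Real.norm_eq_abs]
    linarith
end

section
/- Let α₁, α₂ ∈ ℂ with Im α₁ ≠ 0, Im α₂ ≠ 0, and Im α₁/Im α₂ = p/q a rational number in lowest terms (p ∈ ℤ, q ∈ ℕ, q ≥ 1, gcd(p,q) = 1). Suppose q·Re α₁ − p·Re α₂ = p̃/q̃ is rational in lowest terms (or p̃ = 0, q̃ = 1). Then: (a) 𝓝₂(α₁,α₂) = q̃⁻¹ℤ = {m/q̃ : m ∈ ℤ}; (b) 𝓜₂(α₁,α₂) ⊆ ⋃_{m ∈ ℤ} ℓ_m, where ℓ_m = {λ ∈ ℂ : Im λ = m·Im α₂/q}; and (c) for each m ∈ ℤ the set ℓ_m ∩ 𝓜₂(α₁,α₂) is countable and discrete in ℓ_m. -/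
lemma round_min (x : ℝ) (n : ℤ) : |x - round x| ≤ |x - (n : ℝ)| := by
  rcases eq_or_ne n (round x) with h | h
  · rw [h]
  · have h1 : (1:ℝ) ≤ |(n:ℝ) - (round x : ℝ)| := by
      have h0 : n - round x ≠ 0 := sub_ne_zero.mpr h
      have := Int.one_le_abs h0
      calc (1:ℝ) = ((1:ℤ):ℝ) := by norm_num
        _ ≤ ((|n - round x| : ℤ) : ℝ) := by exact_mod_cast this
        _ = |(n:ℝ) - (round x : ℝ)| := by push_cast; ring_nf
    have h2 := abs_sub_round x
    have h3 := abs_sub_le ((n:ℝ)) x ((round x : ℝ))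
    have h4 : |(n:ℝ) - x| = |x - (n:ℝ)| := abs_sub_comm _ _
    linarith

lemma dioph2_of_lb (a b lam : ℂ) (δ : ℝ) (hδ : 0 < δ)
    (h : ∀ τ ξ η : ℤ, δ ≤ ‖(τ:ℂ) + a*(ξ:ℂ) + b*(η:ℂ) - lam‖) :
    dioph2 a b lam := by
  refine ⟨δ, hδ, 1, one_pos, 1, one_pos, fun τ ξ η hR => ?_⟩
  calc δ * (((|τ|:ℝ) + (|ξ|:ℝ) + (|η|:ℝ)) ^ (-(1:ℝ)))
      ≤ δ * 1 := by
        apply mul_le_mul_of_nonneg_left _ hδ.le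
        exact Real.rpow_le_one_of_one_le_of_nonpos hR (by norm_num)
    _ = δ := mul_one δ
    _ ≤ _ := h τ ξ η

lemma not_dioph2_of_zeros (a b lam : ℂ)
    (h : ∀ R : ℝ, ∃ τ ξ η : ℤ, R ≤ (|τ|:ℝ) + (|ξ|:ℝ) + (|η|:ℝ) ∧
      (τ:ℂ) + a*(ξ:ℂ) + b*(η:ℂ) - lam = 0) :
    ¬ dioph2 a b lam := by
  rintro ⟨C, hC, M, hM, R, hR, hb⟩
  obtain ⟨τ, ξ, η, hs, hz⟩ := h (max R 1)
  have h1 : (1:ℝ) ≤ (|τ|:ℝ) + (|ξ|:ℝ) + (|η|:ℝ) := le_trans (le_max_right R 1) hs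
  have h2 := hb τ ξ η (le_trans (le_max_left R 1) hs)
  rw [hz] at h2
  simp only [map_zero, norm_zero] at h2
  have h3 : 0 < C * (((|τ|:ℝ) + (|ξ|:ℝ) + (|η|:ℝ)) ^ (-M)) :=
    mul_pos hC (Real.rpow_pos_of_pos (by linarith) _)
  linarith

lemma im_formula (a b lam : ℂ) (τ ξ η : ℤ) :
    ((τ:ℂ) + a*(ξ:ℂ) + b*(η:ℂ) - lam).im = a.im * ξ + b.im * η - lam.im := by
  simp [Complex.add_im, Complex.sub_im, Complex.mul_im]

lemma re_formula (a b lam : ℂ) (τ ξ η : ℤ) :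
    ((τ:ℂ) + a*(ξ:ℂ) + b*(η:ℂ) - lam).re = τ + a.re * ξ + b.re * η - lam.re := by
  simp [Complex.add_re, Complex.sub_re, Complex.mul_re]

lemma bezout_any (a b m : ℤ) (h : Int.gcd a b = 1) : ∃ u v : ℤ, a*u + b*v = m := by
  have := Int.gcd_eq_gcd_ab a b
  rw [h] at this
  norm_num at this
  exact ⟨m * Int.gcdA a b, m * Int.gcdB a b, by linear_combination (-m) * this⟩

lemma dioph_off_lines (a b lam : ℂ) (β : ℝ) (hβ : β ≠ 0) (p : ℤ) (q : ℕ)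
    (h1 : a.im = p * β) (h2 : b.im = q * β)
    (hlam : ∀ n : ℤ, lam.im ≠ n * β) : dioph2 a b lam := by
  set x := lam.im / β with hx
  have hxn : ∀ n : ℤ, x ≠ n := fun n hn =>
    hlam n (by rw [hx, div_eq_iff hβ] at hn; exact hn)
  have hd : 0 < |x - round x| := by rw [abs_pos, sub_ne_zero]; exact hxn _
  apply dioph2_of_lb a b lam (|β| * |x - round x|) (mul_pos (abs_pos.mpr hβ) hd)
  intro τ ξ η
  have him := im_formula a b lam τ ξ η
  rw [h1, h2] at him
  have key : ((τ:ℂ) + a*(ξ:ℂ) + b*(η:ℂ) - lam).im = β * (((p*ξ + (q:ℤ)*η : ℤ):ℝ) - x) := by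
    rw [him, hx]; push_cast; field_simp
  calc |β| * |x - round x| ≤ |β| * |x - ((p*ξ + (q:ℤ)*η : ℤ):ℝ)| :=
        mul_le_mul_of_nonneg_left (round_min x _) (abs_nonneg β)
    _ = |((τ:ℂ) + a*(ξ:ℂ) + b*(η:ℂ) - lam).im| := by
        rw [key, abs_mul, abs_sub_comm]
    _ ≤ _ := Complex.abs_im_le_norm _

lemma re_eq (a b lam : ℂ) (p p' ξ₀ η₀ k τ : ℤ) (q q' : ℕ) (hq' : 1 ≤ q')
    (hres : (q:ℝ) * a.re - (p:ℝ) * b.re = (p':ℝ) / (q':ℝ)) :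
    ((τ:ℂ) + a*((ξ₀ + (q:ℤ)*k : ℤ):ℂ) + b*((η₀ - p*k : ℤ):ℂ) - lam).re
      = ((((q':ℤ)*τ + k*p' : ℤ):ℝ) - (q':ℝ) * (lam.re - ((ξ₀:ℝ) * a.re + (η₀:ℝ) * b.re)))/(q':ℝ) := by
  have hq'0 : (q':ℝ) ≠ 0 := Nat.cast_ne_zero.mpr (by omega)
  have hp' : ((q:ℝ) * a.re - (p:ℝ) * b.re) * (q':ℝ) = (p':ℝ) := by
    rw [hres]; field_simp
  rw [re_formula, eq_div_iff hq'0]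
  push_cast
  linear_combination (k:ℝ) * hp'

lemma dioph_on_line (a b lam : ℂ) (β : ℝ) (hβ : β ≠ 0)
    (p p' ξ₀ η₀ m : ℤ) (q q' : ℕ) (hq : 1 ≤ q) (hq' : 1 ≤ q')
    (hpq : Int.gcd p (q:ℤ) = 1)
    (h1 : a.im = p * β) (h2 : b.im = q * β)
    (hbez : p * ξ₀ + (q:ℤ) * η₀ = m)
    (hres : (q:ℝ) * a.re - (p:ℝ) * b.re = (p':ℝ) / (q':ℝ))
    (hlam : lam.im = m * β)
    (hre : ∀ n : ℤ, (q':ℝ) * (lam.re - ((ξ₀:ℝ) * a.re + (η₀:ℝ) * b.re)) ≠ n) :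
    dioph2 a b lam := by
  have hq'0 : (0:ℝ) < (q':ℝ) := by exact_mod_cast hq'
  have hqZ : ((q:ℤ)) ≠ 0 := by exact_mod_cast Nat.pos_of_ne_zero (by omega) |>.ne'
  set y := (q':ℝ) * (lam.re - ((ξ₀:ℝ) * a.re + (η₀:ℝ) * b.re)) with hy
  have hd : 0 < |y - round y| := by rw [abs_pos, sub_ne_zero]; exact hre _
  have hδ : 0 < min |β| (|y - round y| / q') :=
    lt_min (abs_pos.mpr hβ) (div_pos hd hq'0)
  apply dioph2_of_lb a b lam _ hδ
  intro τ ξ η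
  by_cases hN : p * ξ + (q:ℤ) * η = m
  · -- on the critical sublattice: use the real part
    have hdvd : ((q:ℤ)) ∣ p * (ξ - ξ₀) := ⟨η₀ - η, by linear_combination hN - hbez⟩
    have hdvd2 : ((q:ℤ)) ∣ (ξ - ξ₀) :=
      Int.dvd_of_dvd_mul_right_of_gcd_one hdvd (by rw [Int.gcd_comm]; exact hpq)
    obtain ⟨k, hk⟩ := hdvd2
    have hξ : ξ = ξ₀ + (q:ℤ) * k := by omega
    have hη : η = η₀ - p * k := by
      have hc : ((q:ℤ)) * (η₀ - η) = ((q:ℤ)) * (p * k) := by linear_combination hbez - hN + p * hk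
      have := mul_left_cancel₀ hqZ hc
      omega
    have hre2 : ((τ:ℂ) + a*(ξ:ℂ) + b*(η:ℂ) - lam).re
        = ((((q':ℤ)*τ + k*p' : ℤ):ℝ) - y)/(q':ℝ) := by
      rw [hξ, hη]
      exact re_eq a b lam p p' ξ₀ η₀ k τ q q' hq' hres
    calc min |β| (|y - round y| / q') ≤ |y - round y| / q' := min_le_right _ _
      _ ≤ |y - (((q':ℤ)*τ + k*p' : ℤ):ℝ)| / q' := by
          exact (div_le_div_iff_of_pos_right hq'0).mpr (round_min y _)
      _ = |((τ:ℂ) + a*(ξ:ℂ) + b*(η:ℂ) - lam).re| := by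
          rw [hre2, abs_div, abs_sub_comm, abs_of_pos hq'0]
      _ ≤ _ := Complex.abs_re_le_norm _
  · -- off the sublattice: use the imaginary part
    have him := im_formula a b lam τ ξ η
    rw [h1, h2, hlam] at him
    have key : ((τ:ℂ) + a*(ξ:ℂ) + b*(η:ℂ) - lam).im
        = β * (((p*ξ + (q:ℤ)*η - m : ℤ):ℝ)) := by
      rw [him]; push_cast; ring
    have h1' : (1:ℝ) ≤ |((p*ξ + (q:ℤ)*η - m : ℤ):ℝ)| := by
      have : (1:ℤ) ≤ |p*ξ + (q:ℤ)*η - m| := Int.one_le_abs (by omega)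
      calc (1:ℝ) = ((1:ℤ):ℝ) := by norm_num
        _ ≤ ((|p*ξ + (q:ℤ)*η - m| : ℤ):ℝ) := by exact_mod_cast this
        _ = _ := by push_cast; ring
    calc min |β| (|y - round y| / q') ≤ |β| := min_le_left _ _
      _ ≤ |β| * |((p*ξ + (q:ℤ)*η - m : ℤ):ℝ)| := le_mul_of_one_le_right (abs_nonneg β) h1'
      _ = |((τ:ℂ) + a*(ξ:ℂ) + b*(η:ℂ) - lam).im| := by rw [key, abs_mul]
      _ ≤ _ := Complex.abs_im_le_norm _

lemma not_dioph_on_line (a b lam : ℂ) (β : ℝ)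
    (p p' ξ₀ η₀ m n : ℤ) (q q' : ℕ) (hq : 1 ≤ q) (hq' : 1 ≤ q')
    (hpq' : Int.gcd p' (q':ℤ) = 1)
    (h1 : a.im = p * β) (h2 : b.im = q * β)
    (hbez : p * ξ₀ + (q:ℤ) * η₀ = m)
    (hres : (q:ℝ) * a.re - (p:ℝ) * b.re = (p':ℝ) / (q':ℝ))
    (hlam : lam.im = m * β)
    (hre : (q':ℝ) * (lam.re - ((ξ₀:ℝ) * a.re + (η₀:ℝ) * b.re)) = n) :
    ¬ dioph2 a b lam := by
  obtain ⟨v, u, huv⟩ := bezout_any p' (q':ℤ) n hpq'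
  apply not_dioph2_of_zeros
  intro R
  set t : ℤ := max ⌈R⌉ 0 + |v| + |ξ₀| with ht
  have ht0 : 0 ≤ t := by
    have := abs_nonneg v; have := abs_nonneg ξ₀; have := le_max_right ⌈R⌉ 0; omega
  set k : ℤ := v - t * (q':ℤ) with hkdef
  set τ : ℤ := u + t * p' with hτdef
  have hqk : ξ₀ + (q:ℤ)*k = ξ₀ + (q:ℤ)*k := rfl
  refine ⟨τ, ξ₀ + (q:ℤ)*k, η₀ - p*k, ?_, ?_⟩
  · -- size bound
    have e0 : max ⌈R⌉ 0 ≤ |ξ₀ + (q:ℤ)*k| := by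
      have a1 : |(q:ℤ)*k| - |(-ξ₀)| ≤ |(q:ℤ)*k - (-ξ₀)| := abs_sub_abs_le_abs_sub _ _
      have a1' : |(q:ℤ)*k - (-ξ₀)| = |ξ₀ + (q:ℤ)*k| := by rw [sub_neg_eq_add, add_comm]
      have a1'' : |(-ξ₀)| = |ξ₀| := abs_neg _
      have a2 : |(q:ℤ)*k| = (q:ℤ) * |k| := by
        rw [abs_mul, abs_of_nonneg (by positivity : (0:ℤ) ≤ (q:ℤ))]
      have a3 : |k| ≤ (q:ℤ)*|k| :=
        le_mul_of_one_le_left (abs_nonneg k) (by exact_mod_cast hq)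
      have a4 : |t*(q':ℤ)| - |v| ≤ |t*(q':ℤ) - v| := abs_sub_abs_le_abs_sub _ _
      have a5 : |t*(q':ℤ)| = t*(q':ℤ) := abs_of_nonneg (by positivity)
      have a6 : t ≤ t * (q':ℤ) :=
        le_mul_of_one_le_right ht0 (by exact_mod_cast hq')
      have a7 : |t*(q':ℤ) - v| = |k| := by rw [hkdef, abs_sub_comm]
      have hk1 : t - |v| ≤ |k| := by linarith
      have hR0 : max ⌈R⌉ 0 = t - |v| - |ξ₀| := by omega
      linarith
    have e1 : max ⌈R⌉ 0 ≤ |τ| + |ξ₀ + (q:ℤ)*k| + |η₀ - p*k| := by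
      have := abs_nonneg τ; have := abs_nonneg (η₀ - p*k); linarith
    calc R ≤ (⌈R⌉ : ℝ) := Int.le_ceil R
      _ ≤ ((max ⌈R⌉ 0 : ℤ) : ℝ) := by exact_mod_cast le_max_left _ _
      _ ≤ ((|τ| + |ξ₀ + (q:ℤ)*k| + |η₀ - p*k| : ℤ) : ℝ) := by exact_mod_cast e1
      _ = _ := by push_cast; ring
  · -- the value is exactly zero
    have hnum : (q':ℤ)*τ + k*p' = n := by
      rw [hτdef, hkdef]; linear_combination huv
    apply Complex.ext
    · rw [re_eq a b lam p p' ξ₀ η₀ k τ q q' hq' hres, hnum, hre]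
      simp
    · rw [im_formula, h1, h2, hlam]
      simp only [Complex.zero_im]
      push_cast
      have hbezR : (p:ℝ) * (ξ₀:ℝ) + (q:ℝ) * (η₀:ℝ) = (m:ℝ) := by exact_mod_cast hbez
      linear_combination β * hbezR

/-- Case `Im α₁ / Im α₂ = p/q ∈ ℚ` and `q Re α₁ − p Re α₂ = p̃/q̃ ∈ ℚ` (lowest terms):
(a) `𝓝₂ = q̃⁻¹ℤ`; (b) `𝓜₂` lies in the lines `ℓ_m = {Im λ = m Im α₂ / q}`;
(c) each `ℓ_m ∩ 𝓜₂` is countable and discrete in `ℓ_m`. -/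
theorem stmt17 (α₁ α₂ : ℂ) (h1 : α₁.im ≠ 0) (h2 : α₂.im ≠ 0)
    (p : ℤ) (q : ℕ) (hq : 1 ≤ q) (hpq : Int.gcd p (q : ℤ) = 1)
    (hratio : α₁.im / α₂.im = (p : ℝ) / (q : ℝ))
    (p' : ℤ) (q' : ℕ) (hq' : 1 ≤ q') (hpq' : Int.gcd p' (q' : ℤ) = 1)
    (hres : (q : ℝ) * α₁.re - (p : ℝ) * α₂.re = (p' : ℝ) / (q' : ℝ)) :
    {x : ℝ | ¬ dioph2 α₁ α₂ (x : ℂ)} = {x : ℝ | ∃ m : ℤ, x = (m : ℝ) / (q' : ℝ)} ∧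
      (∀ lam : ℂ, ¬ dioph2 α₁ α₂ lam → ∃ m : ℤ, lam.im = (m : ℝ) * α₂.im / (q : ℝ)) ∧
      (∀ m : ℤ,
        Set.Countable {lam : ℂ | ¬ dioph2 α₁ α₂ lam ∧ lam.im = (m : ℝ) * α₂.im / (q : ℝ)} ∧
        ∀ lam ∈ {lam : ℂ | ¬ dioph2 α₁ α₂ lam ∧ lam.im = (m : ℝ) * α₂.im / (q : ℝ)},
          ∃ ε > (0 : ℝ),
            ∀ z ∈ {lam : ℂ | ¬ dioph2 α₁ α₂ lam ∧ lam.im = (m : ℝ) * α₂.im / (q : ℝ)},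
              ‖z - lam‖ < ε → z = lam) := by
  have hqR : (0:ℝ) < (q:ℝ) := by exact_mod_cast hq
  have hq'R : (0:ℝ) < (q':ℝ) := by exact_mod_cast hq'
  set β : ℝ := α₂.im / (q:ℝ) with hβdef
  have hβ : β ≠ 0 := div_ne_zero h2 hqR.ne'
  have him2 : α₂.im = (q:ℝ) * β := by rw [hβdef]; field_simp
  have him1 : α₁.im = (p:ℝ) * β := by
    rw [div_eq_div_iff h2 hqR.ne'] at hratio
    rw [hβdef]; field_simp; linear_combination hratio
  have hline : ∀ (m : ℤ), (m:ℝ) * α₂.im / (q:ℝ) = (m:ℝ) * β := fun m => by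
    rw [hβdef]; ring
  -- characterization on each line
  have keychar : ∀ (m ξ₀ η₀ : ℤ), p * ξ₀ + (q:ℤ) * η₀ = m → ∀ lam : ℂ,
      lam.im = (m:ℝ) * β →
      (¬ dioph2 α₁ α₂ lam ↔ ∃ n : ℤ,
        (q':ℝ) * (lam.re - ((ξ₀:ℝ) * α₁.re + (η₀:ℝ) * α₂.re)) = n) := by
    intro m ξ₀ η₀ hbez lam hlam
    constructor
    · intro hnd
      by_contra hn
      push_neg at hn
      exact hnd (dioph_on_line α₁ α₂ lam β hβ p p' ξ₀ η₀ m q q' hq hq' hpq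
        him1 him2 hbez hres hlam hn)
    · rintro ⟨n, hn⟩
      exact not_dioph_on_line α₁ α₂ lam β p p' ξ₀ η₀ m n q q' hq hq' hpq'
        him1 him2 hbez hres hlam hn
  refine ⟨?_, ?_, ?_⟩
  · -- part (a)
    ext x
    simp only [Set.mem_setOf_eq]
    have hx0 : ((x:ℂ)).im = ((0:ℤ):ℝ) * β := by simp
    have hchar := keychar 0 0 0 (by ring) (x:ℂ) hx0
    rw [hchar]
    constructor
    · rintro ⟨n, hn⟩
      refine ⟨n, ?_⟩
      simp only [Int.cast_zero, zero_mul, add_zero, zero_add, Complex.ofReal_re] at hn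
      field_simp at hn ⊢
      linarith [hn]
    · rintro ⟨n, hn⟩
      refine ⟨n, ?_⟩
      simp only [Int.cast_zero, zero_mul, add_zero, zero_add, Complex.ofReal_re]
      rw [hn]
      field_simp
      simp
  · -- part (b)
    intro lam hnd
    by_contra hno
    push_neg at hno
    refine hnd (dioph_off_lines α₁ α₂ lam β hβ p q him1 him2 ?_)
    intro n hn
    exact hno n (by rw [hline n]; exact hn)
  · -- part (c)
    intro m
    obtain ⟨ξ₀, η₀, hbez⟩ := bezout_any p (q:ℤ) m hpq
    set c : ℝ := (ξ₀:ℝ) * α₁.re + (η₀:ℝ) * α₂.re with hc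
    have hmem : ∀ lam : ℂ,
        (¬ dioph2 α₁ α₂ lam ∧ lam.im = (m:ℝ) * α₂.im / (q:ℝ)) →
        ∃ n : ℤ, lam.re = c + (n:ℝ)/(q':ℝ) ∧ lam.im = (m:ℝ) * β := by
      rintro lam ⟨hnd, hlim⟩
      have hlam : lam.im = (m:ℝ) * β := by rw [← hline m]; exact hlim
      obtain ⟨n, hn⟩ := (keychar m ξ₀ η₀ hbez lam hlam).mp hnd
      refine ⟨n, ?_, hlam⟩
      rw [hc]
      field_simp at hn ⊢
      linarith [hn]
    constructor
    · -- countable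
      apply Set.Countable.mono ?_
        (Set.countable_range (fun n : ℤ =>
          ((c + (n:ℝ)/(q':ℝ) : ℝ) : ℂ) + (((m:ℝ) * β : ℝ) : ℂ) * Complex.I))
      rintro lam hlam
      obtain ⟨n, hre2, him3⟩ := hmem lam hlam
      refine ⟨n, ?_⟩
      apply Complex.ext <;> simp [hre2, him3]
    · -- discrete
      intro lam hlam
      refine ⟨1/(q':ℝ), by positivity, ?_⟩
      intro z hz hdist
      obtain ⟨n₁, hre1, him1'⟩ := hmem lam hlam
      obtain ⟨n₂, hre2, him2'⟩ := hmem z hz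
      have hsame : n₁ = n₂ := by
        by_contra hne
        have h1' : (1:ℝ) ≤ |((n₂ - n₁ : ℤ):ℝ)| := by
          have : (1:ℤ) ≤ |n₂ - n₁| := Int.one_le_abs (by omega)
          calc (1:ℝ) = ((1:ℤ):ℝ) := by norm_num
            _ ≤ ((|n₂ - n₁| : ℤ):ℝ) := by exact_mod_cast this
            _ = _ := by push_cast; ring
        have hre3 : (z - lam).re = ((n₂ - n₁ : ℤ):ℝ)/(q':ℝ) := by
          rw [Complex.sub_re, hre1, hre2]; push_cast; ring
        have habs : (1:ℝ)/(q':ℝ) ≤ |(z - lam).re| := by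
          rw [hre3, abs_div, abs_of_pos hq'R]
          exact (div_le_div_iff_of_pos_right hq'R).mpr h1'
        have := Complex.abs_re_le_norm (z - lam)
        have := abs_nonneg ((z-lam).re)
        linarith
      apply Complex.ext
      · rw [hre1, hre2, hsame]
      · rw [him1', him2']
end

section
/- Let α₁, α₂ ∈ ℂ with Im α₁ ≠ 0, Im α₂ ≠ 0, and Im α₁/Im α₂ = p/q a rational number in lowest terms (p ∈ ℤ, q ∈ ℕ, q ≥ 1, gcd(p,q) = 1). Suppose q·Re α₁ − p·Re α₂ is irrational. Then: (a) 𝓝₂(α₁,α₂) is a dense G_δ subset of ℝ; (b) 𝓜₂(α₁,α₂) ⊆ ⋃_{m ∈ ℤ} ℓ_m, where ℓ_m = {λ ∈ ℂ : Im λ = m·Im α₂/q}; and (c) for each m ∈ ℤ the set ℓ_m ∩ 𝓜₂(α₁,α₂) is a dense G_δ subset of the line ℓ_m. -/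
lemma not_dioph2_iff (a b lam : ℂ) :
    ¬ dioph2 a b lam ↔ ∀ n : ℕ, ∃ τ ξ η : ℤ,
      ((n : ℝ) + 1) ≤ (|τ| : ℝ) + (|ξ| : ℝ) + (|η| : ℝ) ∧
      ‖(τ : ℂ) + a * (ξ : ℂ) + b * (η : ℂ) - lam‖ <
        ((n : ℝ) + 1)⁻¹ * (((|τ| : ℝ) + (|ξ| : ℝ) + (|η| : ℝ)) ^ (-((n : ℝ) + 1))) := by
  constructor
  · intro h n
    by_contra hc
    push_neg at hc
    exact h ⟨((n : ℝ) + 1)⁻¹, by positivity, (n : ℝ) + 1, by positivity, (n : ℝ) + 1,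
      by positivity, fun τ ξ η hR => hc τ ξ η hR⟩
  · rintro h ⟨C, hC, M, hM, R, hR, hd⟩
    obtain ⟨n, hn⟩ := exists_nat_ge (max (max M R) C⁻¹)
    obtain ⟨τ, ξ, η, hS, hlt⟩ := h n
    set S := (|τ| : ℝ) + (|ξ| : ℝ) + (|η| : ℝ) with hSdef
    have hMn : M ≤ (n : ℝ) := le_trans (le_trans (le_max_left _ _) (le_max_left _ _)) hn
    have hRn : R ≤ (n : ℝ) := le_trans (le_trans (le_max_right _ _) (le_max_left _ _)) hn
    have hCn : C⁻¹ ≤ (n : ℝ) := le_trans (le_max_right _ _) hn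
    have hS1 : (1 : ℝ) ≤ S := by
      have : (0:ℝ) ≤ n := Nat.cast_nonneg n
      linarith
    have hge := hd τ ξ η (by linarith)
    have hmono : S ^ (-((n : ℝ) + 1)) ≤ S ^ (-M) :=
      Real.rpow_le_rpow_of_exponent_le hS1 (by linarith)
    have hpos : (0 : ℝ) < S ^ (-M) := Real.rpow_pos_of_pos (by linarith) _
    have h1 : C * S ^ (-M) < ((n : ℝ) + 1)⁻¹ * S ^ (-M) :=
      lt_of_le_of_lt hge (lt_of_lt_of_le hlt (by
        exact mul_le_mul_of_nonneg_left hmono (by positivity)))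
    have h2 : C < ((n : ℝ) + 1)⁻¹ := lt_of_mul_lt_mul_right h1 hpos.le
    have h4 : C * C⁻¹ = 1 := mul_inv_cancel₀ (ne_of_gt hC)
    have h3 : (1:ℝ) ≤ C * ((n:ℝ)+1) := by nlinarith
    have h5 : ((n:ℝ)+1)⁻¹ * ((n:ℝ)+1) = 1 := inv_mul_cancel₀ (by positivity)
    have h6 : (0:ℝ) < (n:ℝ)+1 := by positivity
    nlinarith


lemma isGδ_not_dioph2 (a b : ℂ) (c : ℝ) :
    IsGδ {x : ℝ | ¬ dioph2 a b ((x : ℂ) + Complex.I * (c : ℝ))} := by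
  have hset : {x : ℝ | ¬ dioph2 a b ((x : ℂ) + Complex.I * (c : ℝ))} =
      ⋂ n : ℕ, ⋃ τ : ℤ, ⋃ ξ : ℤ, ⋃ η : ℤ,
        {x : ℝ | ((n : ℝ) + 1) ≤ (|τ| : ℝ) + (|ξ| : ℝ) + (|η| : ℝ) ∧
          ‖(τ : ℂ) + a * (ξ : ℂ) + b * (η : ℂ) - ((x : ℂ) + Complex.I * (c : ℝ))‖ <
            ((n : ℝ) + 1)⁻¹ * (((|τ| : ℝ) + (|ξ| : ℝ) + (|η| : ℝ)) ^ (-((n : ℝ) + 1)))} := by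
    ext x
    simp only [Set.mem_setOf_eq, not_dioph2_iff, Set.mem_iInter, Set.mem_iUnion]
  rw [hset]
  refine IsGδ.iInter fun n => IsOpen.isGδ ?_
  refine isOpen_iUnion fun τ => isOpen_iUnion fun ξ => isOpen_iUnion fun η => ?_
  by_cases hA : ((n : ℝ) + 1) ≤ (|τ| : ℝ) + (|ξ| : ℝ) + (|η| : ℝ)
  · simp only [hA, true_and]
    apply isOpen_lt _ continuous_const
    apply continuous_norm.comp
    fun_prop
  · simp only [hA, false_and]
    exact isOpen_empty

lemma dense_tail (θ : ℝ) (hθ : Irrational θ) (c : ℝ) (T : ℕ) :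
    Dense {y : ℝ | ∃ τ t : ℤ, (T : ℤ) ≤ |t| ∧ y = (τ : ℝ) + c + (t : ℝ) * θ} := by
  -- the subgroup ℤ + ℤθ
  set G : AddSubgroup ℝ :=
    { carrier := {y : ℝ | ∃ a b : ℤ, y = (a : ℝ) + (b : ℝ) * θ}
      add_mem' := by
        rintro u v ⟨a, b, rfl⟩ ⟨a', b', rfl⟩
        exact ⟨a + a', b + b', by push_cast; ring⟩
      zero_mem' := ⟨0, 0, by simp⟩
      neg_mem' := by
        rintro u ⟨a, b, rfl⟩
        exact ⟨-a, -b, by push_cast; ring⟩ } with hGdef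
  have hGdense : Dense (G : Set ℝ) := by
    rcases AddSubgroup.dense_or_cyclic G with h | ⟨a, ha⟩
    · exact h
    · exfalso
      have h1 : (1 : ℝ) ∈ G := ⟨1, 0, by simp⟩
      have h2 : θ ∈ G := ⟨0, 1, by simp⟩
      rw [ha, AddSubgroup.mem_closure_singleton] at h1 h2
      obtain ⟨n, hn⟩ := h1
      obtain ⟨m, hm⟩ := h2
      have hn0 : n ≠ 0 := by rintro rfl; simp at hn
      refine hθ ⟨(m : ℚ) / (n : ℚ), ?_⟩
      have hnR : (n : ℝ) ≠ 0 := Int.cast_ne_zero.mpr hn0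
      push_cast
      rw [div_eq_iff hnR]
      have hn' : (n : ℝ) * a = 1 := by rw [← hn]; push_cast [zsmul_eq_mul]; ring
      have hm' : (m : ℝ) * a = θ := by rw [← hm]; push_cast [zsmul_eq_mul]; ring
      have ha0 : a ≠ 0 := by rintro rfl; simp at hn'
      have hkey : (m : ℝ) = θ * n := by
        calc (m : ℝ) = (m : ℝ) * ((n : ℝ) * a) := by rw [hn']; ring
        _ = ((m : ℝ) * a) * (n : ℝ) := by ring
        _ = θ * n := by rw [hm']
      linarith [hkey]
  rw [Metric.dense_iff]
  intro x ε hε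
  set δ : ℝ := min (ε / ((T : ℝ) + 1)) 1 with hδdef
  have hδpos : 0 < δ := lt_min (by positivity) one_pos
  have hδ1 : δ ≤ 1 := min_le_right _ _
  have hδε : δ * ((T : ℝ) + 1) ≤ ε := by
    have := min_le_left (ε / ((T : ℝ) + 1)) 1
    rw [le_div_iff₀ (by positivity)] at this
    exact this
  obtain ⟨g, hgG, hg0, hgδ⟩ : ∃ g, g ∈ (G : Set ℝ) ∧ 0 < g ∧ g < δ := by
    obtain ⟨g, hgG, hgo⟩ := hGdense.exists_mem_open isOpen_Ioo
      (Set.nonempty_Ioo.mpr (by linarith : (0:ℝ) < δ))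
    exact ⟨g, hgG, hgo.1, hgo.2⟩
  obtain ⟨A, B, hg⟩ := hgG
  have hB : B ≠ 0 := by
    rintro rfl
    simp only [Int.cast_zero, zero_mul, add_zero] at hg
    subst hg
    have h1A : (1 : ℤ) ≤ A := by exact_mod_cast hg0
    have : (A : ℝ) < 1 := lt_of_lt_of_le hgδ hδ1
    exact absurd (by exact_mod_cast this : A < 1) (not_lt.mpr h1A)
  -- key claim for nonnegative targets
  have claim : ∀ w : ℝ, 0 ≤ w → ∃ k : ℤ, (T : ℤ) ≤ |k| ∧ |(k : ℝ) * g - w| < ε := by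
    intro w hw
    refine ⟨max ⌈w / g⌉ (T : ℤ), ?_, ?_⟩
    · have : (T : ℤ) ≤ max ⌈w / g⌉ (T : ℤ) := le_max_right _ _
      exact le_trans this (le_abs_self _)
    · set k : ℤ := max ⌈w / g⌉ (T : ℤ) with hk
      have hk1 : (⌈w / g⌉ : ℝ) ≤ (k : ℝ) := by exact_mod_cast le_max_left _ _
      have hk2 : ((T : ℕ) : ℝ) ≤ (k : ℝ) := by exact_mod_cast (le_max_right ⌈w / g⌉ (T : ℤ))
      have hlb : w ≤ (k : ℝ) * g := by
        have h1 : w / g ≤ (⌈w / g⌉ : ℝ) := Int.le_ceil _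
        have h2 : w / g ≤ (k : ℝ) := le_trans h1 hk1
        calc w = w / g * g := by field_simp
        _ ≤ (k : ℝ) * g := mul_le_mul_of_nonneg_right h2 (le_of_lt hg0)
      have hub : (k : ℝ) * g - w < ε := by
        rcases le_total ⌈w / g⌉ (T : ℤ) with h | h
        · have hkT : k = (T : ℤ) := max_eq_right h
          have hTg : ((T : ℝ)) * g ≤ (T : ℝ) * δ :=
            mul_le_mul_of_nonneg_left (le_of_lt hgδ) (by positivity)
          have : (T : ℝ) * δ + δ ≤ ε := by nlinarith
          have hkg : (k : ℝ) * g = (T : ℝ) * g := by rw [hkT]; push_cast; ring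
          linarith
        · have hkT : k = ⌈w / g⌉ := max_eq_left h
          have h1 : (⌈w / g⌉ : ℝ) < w / g + 1 := Int.ceil_lt_add_one _
          have h2 : (k : ℝ) * g < (w / g + 1) * g := by
            rw [hkT]
            exact mul_lt_mul_of_pos_right h1 hg0
          have h3 : (w / g + 1) * g = w + g := by field_simp
          have h4 : g < ε := by nlinarith [hδε, hδpos, hδ1]
          linarith
      rw [abs_sub_lt_iff]
      constructor <;> linarith
  -- produce the point
  obtain ⟨k, hkT, hkd⟩ : ∃ k : ℤ, (T : ℤ) ≤ |k| ∧ |(k : ℝ) * g - (x - c)| < ε := by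
    rcases le_or_gt 0 (x - c) with hw | hw
    · exact claim (x - c) hw
    · obtain ⟨k, hk1, hk2⟩ := claim (-(x - c)) (by linarith)
      refine ⟨-k, by simpa using hk1, ?_⟩
      have : |(-k : ℤ) * g - (x - c)| = |(k : ℝ) * g - (-(x - c))| := by
        push_cast
        rw [← abs_neg]
        ring_nf
      calc |((-k : ℤ) : ℝ) * g - (x - c)| = |(k : ℝ) * g - (-(x - c))| := by
            push_cast; rw [← abs_neg]; ring_nf
        _ < ε := hk2
  have habs : (T : ℤ) ≤ |k * B| := by
    rw [abs_mul]
    calc (T : ℤ) ≤ |k| := hkT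
    _ = |k| * 1 := by ring
    _ ≤ |k| * |B| := by
      have := Int.one_le_abs hB
      exact mul_le_mul_of_nonneg_left this (abs_nonneg k)
  refine ⟨(k * A : ℤ) + c + ((k * B : ℤ) : ℝ) * θ, ?_, ⟨k * A, k * B, habs, rfl⟩⟩
  rw [Metric.mem_ball, Real.dist_eq]
  have : ((k * A : ℤ) : ℝ) + c + ((k * B : ℤ) : ℝ) * θ - x = (k : ℝ) * g - (x - c) := by
    rw [hg]; push_cast; ring
  rw [this]
  exact hkd

lemma dioph2_off_line (α₁ α₂ : ℂ) (h2 : α₂.im ≠ 0)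
    (p : ℤ) (q : ℕ) (hq : 1 ≤ q)
    (hr : α₁.im * (q : ℝ) = (p : ℝ) * α₂.im)
    (lam : ℂ) (hm : ∀ m : ℤ, lam.im ≠ (m : ℝ) * α₂.im / (q : ℝ)) :
    dioph2 α₁ α₂ lam := by
  have hq0 : (q : ℝ) ≠ 0 := by positivity
  set u : ℝ := lam.im * (q : ℝ) / α₂.im with hu
  have hunotint : ∀ k : ℤ, u ≠ (k : ℝ) := by
    intro k hk
    apply hm k
    rw [hu] at hk
    field_simp at hk
    field_simp
    linarith
  set d : ℝ := min (Int.fract u) (1 - Int.fract u) with hd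
  have hfr0 : Int.fract u ≠ 0 := by
    intro h
    have : u = (⌊u⌋ : ℝ) := by
      have := Int.floor_add_fract u
      rw [h] at this; linarith
    exact hunotint ⌊u⌋ this
  have hdpos : 0 < d :=
    lt_min (lt_of_le_of_ne (Int.fract_nonneg u) (Ne.symm hfr0))
      (by linarith [Int.fract_lt_one u])
  have hlb : ∀ k : ℤ, d ≤ |(k : ℝ) - u| := by
    intro k
    have hfl := Int.floor_add_fract u
    rcases le_or_gt (k : ℝ) u with h | h
    · have hk : k ≤ ⌊u⌋ := Int.le_floor.mpr h
      have hk' : (k : ℝ) ≤ (⌊u⌋ : ℝ) := by exact_mod_cast hk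
      have : Int.fract u ≤ u - k := by linarith
      rw [abs_sub_comm, abs_of_nonneg (by linarith)]
      exact le_trans (min_le_left _ _) this
    · have hk : ⌊u⌋ < k := by
        have := Int.floor_le u
        exact_mod_cast lt_of_le_of_lt (by exact_mod_cast this : ((⌊u⌋ : ℝ)) ≤ u) h
      have hk' : (⌊u⌋ : ℝ) + 1 ≤ (k : ℝ) := by exact_mod_cast hk
      have : 1 - Int.fract u ≤ (k : ℝ) - u := by linarith
      rw [abs_of_nonneg (by linarith)]
      exact le_trans (min_le_right _ _) this
  refine ⟨|α₂.im / (q : ℝ)| * d, by positivity, 1, one_pos, 1, one_pos, ?_⟩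
  intro τ ξ η hS
  set z : ℂ := (τ : ℂ) + α₁ * (ξ : ℂ) + α₂ * (η : ℂ) - lam with hz
  have him : z.im = (α₂.im / (q : ℝ)) * (((p * ξ + (q : ℤ) * η : ℤ) : ℝ) - u) := by
    simp only [hz, Complex.sub_im, Complex.add_im, Complex.intCast_im, Complex.mul_im,
      Complex.intCast_re, mul_zero, add_zero, zero_add]
    rw [hu]
    push_cast
    field_simp
    linear_combination (ξ : ℝ) * hr
  have hbound : |α₂.im / (q : ℝ)| * d ≤ ‖z‖ := by
    calc |α₂.im / (q : ℝ)| * d ≤ |α₂.im / (q : ℝ)| * |((p * ξ + (q : ℤ) * η : ℤ) : ℝ) - u| :=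
          mul_le_mul_of_nonneg_left (hlb _) (abs_nonneg _)
      _ = |z.im| := by rw [him, abs_mul]
      _ ≤ ‖z‖ := Complex.abs_im_le_norm z
  have hS1 : (1 : ℝ) ≤ (|τ| : ℝ) + (|ξ| : ℝ) + (|η| : ℝ) := hS
  have hrp : ((|τ| : ℝ) + (|ξ| : ℝ) + (|η| : ℝ)) ^ (-(1:ℝ)) ≤ 1 :=
    Real.rpow_le_one_of_one_le_of_nonpos hS1 (by norm_num)
  calc |α₂.im / (q : ℝ)| * d * ((|τ| : ℝ) + (|ξ| : ℝ) + (|η| : ℝ)) ^ (-(1:ℝ))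
      ≤ |α₂.im / (q : ℝ)| * d * 1 := by
        apply mul_le_mul_of_nonneg_left hrp (by positivity)
    _ = |α₂.im / (q : ℝ)| * d := by ring
    _ ≤ ‖z‖ := hbound

lemma dense_not_dioph2 (α₁ α₂ : ℂ) (h2 : α₂.im ≠ 0)
    (p : ℤ) (q : ℕ) (hq : 1 ≤ q) (hpq : Int.gcd p (q : ℤ) = 1)
    (hr : α₁.im * (q : ℝ) = (p : ℝ) * α₂.im)
    (hres : Irrational ((q : ℝ) * α₁.re - (p : ℝ) * α₂.re)) (m : ℤ) :
    Dense {x : ℝ | ¬ dioph2 α₁ α₂ ((x : ℂ) + Complex.I * (((m : ℝ) * α₂.im / (q : ℝ)) : ℝ))} := by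
  have hq0 : (q : ℝ) ≠ 0 := by positivity
  -- Bézout
  obtain ⟨u, v, huv⟩ := Int.isCoprime_iff_gcd_eq_one.mpr hpq
  set ξ₀ : ℤ := m * u with hξ₀
  set η₀ : ℤ := m * v with hη₀
  have hbez : p * ξ₀ + (q : ℤ) * η₀ = m := by
    rw [hξ₀, hη₀]; linear_combination m * huv
  set θ : ℝ := (q : ℝ) * α₁.re - (p : ℝ) * α₂.re with hθ
  set c : ℝ := (ξ₀ : ℝ) * α₁.re + (η₀ : ℝ) * α₂.re with hc
  -- size of ξ-coordinate
  have key : ∀ n : ℕ, ∀ t : ℤ, (n : ℤ) + 1 + |ξ₀| ≤ |t| → (n : ℤ) + 1 ≤ |ξ₀ + (q : ℤ) * t| := by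
    intro n t ht
    have h1 : |(q : ℤ) * t| ≤ |ξ₀ + (q : ℤ) * t| + |ξ₀| := by
      calc |(q : ℤ) * t| = |(ξ₀ + (q : ℤ) * t) + (-ξ₀)| := by ring_nf
        _ ≤ |ξ₀ + (q : ℤ) * t| + |(-ξ₀)| := abs_add_le _ _
        _ = |ξ₀ + (q : ℤ) * t| + |ξ₀| := by rw [abs_neg]
    have h2 : |t| ≤ |(q : ℤ) * t| := by
      rw [abs_mul]
      calc |t| = 1 * |t| := by ring
        _ ≤ |(q : ℤ)| * |t| := by
          apply mul_le_mul_of_nonneg_right _ (abs_nonneg t)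
          rw [abs_of_nonneg (by positivity : (0:ℤ) ≤ (q:ℤ))]
          exact_mod_cast hq
    linarith
  -- the open dense sets
  set V : ℕ → Set ℝ := fun n => ⋃ τ : ℤ, ⋃ t : ℤ,
    {x : ℝ | ((n : ℤ) + 1 + |ξ₀| ≤ |t|) ∧
      |(τ : ℝ) + c + (t : ℝ) * θ - x| <
        ((n : ℝ) + 1)⁻¹ * (((|τ| : ℝ) + ((|ξ₀ + (q : ℤ) * t| : ℤ) : ℝ) + ((|η₀ - p * t| : ℤ) : ℝ))
          ^ (-((n : ℝ) + 1)))} with hV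
  have hVopen : ∀ n, IsOpen (V n) := by
    intro n
    refine isOpen_iUnion fun τ => isOpen_iUnion fun t => ?_
    by_cases hA : (n : ℤ) + 1 + |ξ₀| ≤ |t|
    · simp only [hA, true_and]
      exact isOpen_lt (by fun_prop) continuous_const
    · simp only [hA, false_and]
      exact isOpen_empty
  have hVdense : ∀ n, Dense (V n) := by
    intro n
    have hsub : {y : ℝ | ∃ τ t : ℤ, ((n + 1 + ξ₀.natAbs : ℕ) : ℤ) ≤ |t| ∧
        y = (τ : ℝ) + c + (t : ℝ) * θ} ⊆ V n := by
      rintro y ⟨τ, t, ht, rfl⟩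
      have ht' : (n : ℤ) + 1 + |ξ₀| ≤ |t| := by
        rw [Int.abs_eq_natAbs]; exact_mod_cast ht
      refine Set.mem_iUnion.mpr ⟨τ, Set.mem_iUnion.mpr ⟨t, ht', ?_⟩⟩
      have hpos : (0 : ℝ) < ((n : ℝ) + 1)⁻¹ *
          (((|τ| : ℝ) + ((|ξ₀ + (q : ℤ) * t| : ℤ) : ℝ) + ((|η₀ - p * t| : ℤ) : ℝ))
            ^ (-((n : ℝ) + 1))) := by
        have h1 : (n : ℤ) + 1 ≤ |ξ₀ + (q : ℤ) * t| := key n t ht'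
        have h2 : (0 : ℝ) < (|τ| : ℝ) + ((|ξ₀ + (q : ℤ) * t| : ℤ) : ℝ) + ((|η₀ - p * t| : ℤ) : ℝ) := by
          have h3 : (1 : ℝ) ≤ ((|ξ₀ + (q : ℤ) * t| : ℤ) : ℝ) := by
            have : (1 : ℤ) ≤ |ξ₀ + (q : ℤ) * t| := by
              have : (0:ℤ) ≤ (n:ℤ) := Int.ofNat_nonneg n
              linarith
            exact_mod_cast this
          have h4 : (0 : ℝ) ≤ (|τ| : ℝ) := by positivity
          have h5 : (0 : ℝ) ≤ ((|η₀ - p * t| : ℤ) : ℝ) := by positivity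
          linarith
        positivity
      simpa using hpos
    exact Dense.mono hsub (dense_tail θ hres c (n + 1 + ξ₀.natAbs))
  have hsub2 : (⋂ n, V n) ⊆
      {x : ℝ | ¬ dioph2 α₁ α₂ ((x : ℂ) + Complex.I * (((m : ℝ) * α₂.im / (q : ℝ)) : ℝ))} := by
    intro x hx
    rw [Set.mem_setOf_eq, not_dioph2_iff]
    intro n
    have hxn := Set.mem_iInter.mp hx n
    obtain ⟨τ, hτ⟩ := Set.mem_iUnion.mp hxn
    obtain ⟨t, ht, hlt⟩ := Set.mem_iUnion.mp hτ
    refine ⟨τ, ξ₀ + (q : ℤ) * t, η₀ - p * t, ?_, ?_⟩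
    · have h1 : (n : ℤ) + 1 ≤ |ξ₀ + (q : ℤ) * t| := key n t ht
      have h2 : ((n : ℝ) + 1) ≤ ((|ξ₀ + (q : ℤ) * t| : ℤ) : ℝ) := by exact_mod_cast h1
      push_cast at h2 ⊢
      have h4 := abs_nonneg ((τ : ℝ))
      have h5 := abs_nonneg ((η₀ : ℝ) - (p : ℝ) * (t : ℝ))
      linarith
    · set z : ℂ := (τ : ℂ) + α₁ * ((ξ₀ + (q : ℤ) * t : ℤ) : ℂ) + α₂ * ((η₀ - p * t : ℤ) : ℂ) -
        ((x : ℂ) + Complex.I * (((m : ℝ) * α₂.im / (q : ℝ)) : ℝ)) with hz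
      have him : z.im = 0 := by
        simp only [hz, Complex.sub_im, Complex.add_im, Complex.intCast_im, Complex.mul_im,
          Complex.intCast_re, Complex.ofReal_im, Complex.ofReal_re, Complex.I_im, Complex.I_re,
          mul_zero, add_zero, zero_add, zero_mul, one_mul, mul_one]
        have hbezR : (p : ℝ) * (ξ₀ : ℝ) + (q : ℝ) * (η₀ : ℝ) = (m : ℝ) := by exact_mod_cast hbez
        push_cast
        field_simp
        linear_combination ((ξ₀ : ℝ) + (q : ℝ) * (t : ℝ)) * hr + α₂.im * hbezR
      have hre : z.re = (τ : ℝ) + c + (t : ℝ) * θ - x := by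
        simp only [hz, Complex.sub_re, Complex.add_re, Complex.intCast_re, Complex.mul_re,
          Complex.intCast_im, Complex.ofReal_re, Complex.ofReal_im, Complex.I_re, Complex.I_im,
          mul_zero, add_zero, zero_add, zero_mul, one_mul, sub_zero, mul_one]
        rw [hc, hθ]
        push_cast
        ring
      have habs : ‖z‖ = |(τ : ℝ) + c + (t : ℝ) * θ - x| := by
        rw [Complex.norm_def, Complex.normSq_apply, him, mul_zero, add_zero, ← hre,
          Real.sqrt_mul_self_eq_abs]
      rw [habs]
      exact_mod_cast hlt
  have hdense : Dense (⋂ n, V n) := dense_iInter_of_isOpen hVopen hVdense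
  exact hdense.mono hsub2

/-- Case `Im α₁ / Im α₂ = p/q ∈ ℚ` (lowest terms) and `q Re α₁ − p Re α₂` irrational:
(a) `𝓝₂` is a dense `G_δ` subset of `ℝ`; (b) `𝓜₂` lies in the lines
`ℓ_m = {Im λ = m Im α₂ / q}`; (c) each `ℓ_m ∩ 𝓜₂` is a dense `G_δ` subset of `ℓ_m`
(parametrizing `ℓ_m` isometrically by the real part). -/
theorem stmt18 (α₁ α₂ : ℂ) (h1 : α₁.im ≠ 0) (h2 : α₂.im ≠ 0)
    (p : ℤ) (q : ℕ) (hq : 1 ≤ q) (hpq : Int.gcd p (q : ℤ) = 1)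
    (hratio : α₁.im / α₂.im = (p : ℝ) / (q : ℝ))
    (hres : Irrational ((q : ℝ) * α₁.re - (p : ℝ) * α₂.re)) :
    (Dense {x : ℝ | ¬ dioph2 α₁ α₂ (x : ℂ)} ∧ IsGδ {x : ℝ | ¬ dioph2 α₁ α₂ (x : ℂ)}) ∧
      (∀ lam : ℂ, ¬ dioph2 α₁ α₂ lam → ∃ m : ℤ, lam.im = (m : ℝ) * α₂.im / (q : ℝ)) ∧
      (∀ m : ℤ,
        Dense {x : ℝ | ¬ dioph2 α₁ α₂ ((x : ℂ) + Complex.I * (((m : ℝ) * α₂.im / (q : ℝ)) : ℝ))} ∧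
        IsGδ {x : ℝ | ¬ dioph2 α₁ α₂ ((x : ℂ) + Complex.I * (((m : ℝ) * α₂.im / (q : ℝ)) : ℝ))}) := by
  have hq0 : (q : ℝ) ≠ 0 := by positivity
  have hr : α₁.im * (q : ℝ) = (p : ℝ) * α₂.im := by
    field_simp at hratio
    linarith [hratio]
  refine ⟨?_, ?_, ?_⟩
  · have ha := dense_not_dioph2 α₁ α₂ h2 p q hq hpq hr hres 0
    have hb := isGδ_not_dioph2 α₁ α₂ (((0 : ℤ) : ℝ) * α₂.im / (q : ℝ))
    have hset : {x : ℝ | ¬ dioph2 α₁ α₂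
        ((x : ℂ) + Complex.I * ((((0 : ℤ) : ℝ) * α₂.im / (q : ℝ)) : ℝ))} =
        {x : ℝ | ¬ dioph2 α₁ α₂ (x : ℂ)} := by
      ext x
      norm_num
    rw [hset] at ha hb
    exact ⟨ha, hb⟩
  · intro lam hnd
    by_contra hcon
    push_neg at hcon
    exact hnd (dioph2_off_line α₁ α₂ h2 p q hq hr lam hcon)
  · intro m
    exact ⟨dense_not_dioph2 α₁ α₂ h2 p q hq hpq hr hres m,
      isGδ_not_dioph2 α₁ α₂ ((m : ℝ) * α₂.im / (q : ℝ))⟩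
end

section
/- Let α₁, α₂ ∈ ℂ with Im α₁ ≠ 0 and Im α₂ ≠ 0, and suppose the ratio Im α₁/Im α₂ is irrational and is not a Liouville number. Then 𝓝₂(α₁,α₂) = ∅; that is, the Diophantine condition D((α₁,α₂),λ) holds for every real λ. -/
/-- Non-Liouville irrational numbers satisfy a uniform Diophantine bound. -/
lemma nonliouville_bound (r : ℝ) (hirr : Irrational r) (hlio : ¬ Liouville r) :
    ∃ n : ℕ, ∀ a b : ℤ, 1 < b → (1:ℝ) / (b:ℝ) ^ n ≤ |r - a / b| := by
  rw [Liouville] at hlio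
  push_neg at hlio
  obtain ⟨n, hn⟩ := hlio
  refine ⟨n, fun a b hb => ?_⟩
  have hne : r ≠ (a:ℝ) / (b:ℝ) := by
    intro h
    have h2 : ¬ Irrational ((a:ℝ)/(b:ℝ)) := by
      have := Rat.not_irrational ((a:ℚ)/(b:ℚ))
      push_cast at this
      exact this
    exact h2 (h ▸ hirr)
  exact hn a b hb hne

/-- key lemma: for ξ ≠ 0, |ξ r + η| ≥ |ξ| / (2|ξ|)^n. -/
lemma key_bound (r : ℝ) (n : ℕ)
    (hn : ∀ a b : ℤ, 1 < b → (1:ℝ) / (b:ℝ) ^ n ≤ |r - a / b|)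
    (ξ η : ℤ) (hξ : ξ ≠ 0) :
    (|ξ| : ℝ) / ((2 * |ξ| : ℝ)) ^ n ≤ |(ξ:ℝ) * r + η| := by
  have hξ1 : (1:ℝ) ≤ (|ξ| : ℝ) := by exact_mod_cast Int.one_le_abs (by omega)
  have hξR : ((ξ:ℝ)) ≠ 0 := Int.cast_ne_zero.mpr hξ
  -- choose a, b with b = 2|ξ| and a/b = -η/ξ
  obtain ⟨a, b, hb1, hbval, habval⟩ :
      ∃ a b : ℤ, 1 < b ∧ (b:ℝ) = 2 * |ξ| ∧ (a:ℝ) / (b:ℝ) = -(η:ℝ) / ξ := by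
    rcases hξ.lt_or_gt with h | h
    · refine ⟨2 * η, -2 * ξ, by omega, ?_, ?_⟩
      · push_cast
        rw [abs_of_neg (by exact_mod_cast h)]
        ring
      · have : ((-2 * ξ : ℤ) : ℝ) ≠ 0 := by
          push_cast; intro hc; apply hξR; linarith
        field_simp
        push_cast
        ring
    · refine ⟨-2 * η, 2 * ξ, by omega, ?_, ?_⟩
      · push_cast
        rw [abs_of_pos (by exact_mod_cast h)]
      · have : ((2 * ξ : ℤ) : ℝ) ≠ 0 := by
          push_cast; intro hc; apply hξR; linarith
        field_simp
        push_cast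
        ring
  have h1 : (ξ:ℝ) * r + η = ξ * (r - a / b) := by
    rw [habval]
    field_simp
    ring
  rw [h1, abs_mul, ← hbval]
  calc (|ξ| : ℝ) / (b:ℝ) ^ n = |(ξ:ℝ)| * (1 / (b:ℝ) ^ n) := by ring
    _ ≤ |(ξ:ℝ)| * |r - a / b| :=
        mul_le_mul_of_nonneg_left (hn a b hb1) (abs_nonneg _)

/-- If `Im α₁ ≠ 0`, `Im α₂ ≠ 0` and `Im α₁ / Im α₂` is irrational and not Liouville,
then `𝓝₂(α₁, α₂) = ∅`: `D((α₁, α₂), λ)` holds for every real `λ`. -/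
theorem stmt19 (α₁ α₂ : ℂ) (h1 : α₁.im ≠ 0) (h2 : α₂.im ≠ 0)
    (hirr : Irrational (α₁.im / α₂.im)) (hlio : ¬ Liouville (α₁.im / α₂.im)) :
    ∀ x : ℝ, dioph2 α₁ α₂ (x : ℂ) := by
  intro x
  obtain ⟨n, hn⟩ := nonliouville_bound _ hirr hlio
  set r : ℝ := α₁.im / α₂.im with hr
  set d : ℝ := |α₂.im| with hd
  have hd0 : 0 < d := abs_pos.mpr h2
  set c : ℝ := d / 2 ^ n with hc
  have hc0 : 0 < c := by positivity
  refine ⟨min 1 c, by positivity, (n:ℝ) + 1, by positivity, 2 * |x| + 2, by positivity,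
    fun τ ξ η hR => ?_⟩
  set s : ℝ := (|τ| : ℝ) + (|ξ| : ℝ) + (|η| : ℝ) with hs
  have hs1 : (1:ℝ) ≤ s := by
    have : (2:ℝ) * |x| + 2 ≤ s := hR
    have : (0:ℝ) ≤ |x| := abs_nonneg x
    linarith
  have hs0 : (0:ℝ) < s := by linarith
  -- rewrite the rpow as inverse of a nat pow
  have hpow : s ^ (-((n:ℝ) + 1)) = (s ^ (n + 1) : ℝ)⁻¹ := by
    rw [Real.rpow_neg hs0.le, ← Real.rpow_natCast s (n + 1)]
    push_cast
    ring_nf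
  rw [hpow]
  have hsp1 : (1:ℝ) ≤ s ^ (n + 1) := one_le_pow₀ hs1
  have hinv1 : (s ^ (n + 1) : ℝ)⁻¹ ≤ 1 := inv_le_one_of_one_le₀ hsp1
  by_cases hcase : ξ = 0 ∧ η = 0
  · -- purely real case: value is τ - x
    obtain ⟨hξ0, hη0⟩ := hcase
    subst hξ0; subst hη0
    have hτ : (2:ℝ) * |x| + 2 ≤ ((|τ|:ℤ) : ℝ) := by
      simp only [hs] at hR
      simpa using hR
    have hval : ‖(τ : ℂ) + α₁ * ((0:ℤ):ℂ) + α₂ * ((0:ℤ):ℂ) - (x:ℂ)‖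
        = |(τ:ℝ) - x| := by
      rw [show ((τ:ℂ) + α₁ * ((0:ℤ):ℂ) + α₂ * ((0:ℤ):ℂ) - (x:ℂ))
          = (((τ:ℝ) - x : ℝ) : ℂ) by push_cast; ring]
      rw [Complex.norm_real, Real.norm_eq_abs]
    rw [hval]
    have h3 : (1:ℝ) ≤ |(τ:ℝ) - x| := by
      have := abs_sub_abs_le_abs_sub ((τ:ℝ)) x
      have hτ' : ((|τ|:ℤ):ℝ) = |(τ:ℝ)| := by push_cast; rfl
      rw [hτ'] at hτ
      have hx : (0:ℝ) ≤ |x| := abs_nonneg x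
      linarith
    calc min 1 c * (s ^ (n + 1) : ℝ)⁻¹ ≤ 1 * 1 := by
          apply mul_le_mul (min_le_left _ _) hinv1 (by positivity) zero_le_one
      _ ≤ |(τ:ℝ) - x| := by linarith
  · -- imaginary part bound
    have hs2 : (1:ℝ) ≤ (|ξ| : ℝ) + (|η| : ℝ) := by
      have : ξ ≠ 0 ∨ η ≠ 0 := by tauto
      rcases this with h | h
      · have : (1:ℝ) ≤ (|ξ|:ℝ) := by exact_mod_cast Int.one_le_abs (by omega)
        have : (0:ℝ) ≤ (|η|:ℝ) := by positivity
        linarith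
      · have : (1:ℝ) ≤ (|η|:ℝ) := by exact_mod_cast Int.one_le_abs (by omega)
        have : (0:ℝ) ≤ (|ξ|:ℝ) := by positivity
        linarith
    set s₂ : ℝ := (|ξ| : ℝ) + (|η| : ℝ) with hs₂
    have hs₂s : s₂ ≤ s := by
      have : (0:ℝ) ≤ (|τ|:ℝ) := by positivity
      simp only [hs, hs₂]; linarith
    have hs₂0 : (0:ℝ) < s₂ := by linarith
    -- the imaginary part
    have him : ((τ : ℂ) + α₁ * (ξ:ℂ) + α₂ * (η:ℂ) - (x:ℂ)).im
        = (ξ:ℝ) * α₁.im + (η:ℝ) * α₂.im := by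
      simp [Complex.add_im, Complex.sub_im, Complex.mul_im]
      ring
    have habs : |(ξ:ℝ) * α₁.im + (η:ℝ) * α₂.im|
        ≤ ‖(τ : ℂ) + α₁ * (ξ:ℂ) + α₂ * (η:ℂ) - (x:ℂ)‖ := by
      rw [← him]; exact Complex.abs_im_le_norm _
    -- factor out α₂.im
    have hfac : (ξ:ℝ) * α₁.im + (η:ℝ) * α₂.im = α₂.im * ((ξ:ℝ) * r + η) := by
      rw [hr]; field_simp
    have hV : |(ξ:ℝ) * α₁.im + (η:ℝ) * α₂.im| = d * |(ξ:ℝ) * r + η| := by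
      rw [hfac, abs_mul, hd]
    -- main estimate : c * (s₂^(n+1))⁻¹ ≤ d * |ξ r + η|
    have hmain : c * (s₂ ^ (n + 1) : ℝ)⁻¹ ≤ d * |(ξ:ℝ) * r + η| := by
      by_cases hξ : ξ = 0
      · -- then |η| ≥ 1
        have hη : η ≠ 0 := by tauto
        have hη1 : (1:ℝ) ≤ (|η|:ℝ) := by exact_mod_cast Int.one_le_abs (by omega)
        have : |(ξ:ℝ) * r + η| = |(η:ℝ)| := by simp [hξ]
        rw [this]
        have h4 : (1:ℝ) ≤ |(η:ℝ)| := hη1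
        have h5 : (s₂ ^ (n + 1) : ℝ)⁻¹ ≤ 1 := inv_le_one_of_one_le₀ (one_le_pow₀ hs2)
        have h6 : c ≤ d := by
          rw [hc]
          apply div_le_self hd0.le
          exact one_le_pow₀ (by norm_num)
        calc c * (s₂ ^ (n + 1) : ℝ)⁻¹ ≤ d * 1 := by
              apply mul_le_mul h6 h5 (by positivity) hd0.le
          _ ≤ d * |(η:ℝ)| := by nlinarith
      · have hkey := key_bound r n hn ξ η hξ
        have hξ1 : (1:ℝ) ≤ (|ξ|:ℝ) := by exact_mod_cast Int.one_le_abs (by omega)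
        set X : ℝ := |(ξ:ℝ)| with hX
        have hX1 : (1:ℝ) ≤ X := hξ1
        have hXs : X ≤ s₂ := by
          have : (0:ℝ) ≤ |(η:ℝ)| := abs_nonneg _
          simp only [hs₂]; linarith
        have hpow2 : X ^ n ≤ s₂ ^ (n+1) := by
          calc X ^ n ≤ s₂ ^ n := pow_le_pow_left₀ (by positivity) hXs n
            _ ≤ s₂ ^ (n+1) := pow_le_pow_right₀ (by linarith) (by omega)
        have h7 : (s₂ ^ (n + 1) : ℝ)⁻¹ * (2 * X) ^ n ≤ 2 ^ n * X := by
          have h8 : (s₂ ^ (n + 1) : ℝ)⁻¹ * X ^ n ≤ 1 := by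
            rw [inv_mul_le_iff₀ (by positivity)]
            simpa using hpow2
          have h9 : (0:ℝ) < (2:ℝ) ^ n := by positivity
          calc (s₂ ^ (n + 1) : ℝ)⁻¹ * (2 * X) ^ n
              = 2 ^ n * ((s₂ ^ (n + 1) : ℝ)⁻¹ * X ^ n) := by rw [mul_pow]; ring
            _ ≤ 2 ^ n * 1 := mul_le_mul_of_nonneg_left h8 h9.le
            _ ≤ 2 ^ n * X := by nlinarith
        have hstep : c * (s₂ ^ (n + 1) : ℝ)⁻¹ ≤ d * ((|ξ|:ℝ) / (2 * |ξ| : ℝ) ^ n) := by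
          have hrw : d * ((|ξ|:ℝ) / (2 * |ξ| : ℝ) ^ n) = d * X / (2 * X) ^ n := by
            rw [hX, ← mul_div_assoc, Int.cast_abs]
          rw [hrw, hc, div_mul_eq_mul_div, div_le_div_iff₀ (by positivity) (by positivity)]
          calc d * (s₂ ^ (n + 1) : ℝ)⁻¹ * (2 * X) ^ n
              = d * ((s₂ ^ (n + 1) : ℝ)⁻¹ * (2 * X) ^ n) := by ring
            _ ≤ d * (2 ^ n * X) := mul_le_mul_of_nonneg_left h7 hd0.le
            _ = d * X * 2 ^ n := by ring
        calc c * (s₂ ^ (n + 1) : ℝ)⁻¹ ≤ d * ((|ξ|:ℝ) / (2 * |ξ| : ℝ) ^ n) := hstep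
          _ ≤ d * |(ξ:ℝ) * r + η| := mul_le_mul_of_nonneg_left hkey hd0.le
    -- assemble
    have hanti : (s ^ (n + 1) : ℝ)⁻¹ ≤ (s₂ ^ (n + 1) : ℝ)⁻¹ := by
      apply inv_anti₀ (by positivity)
      exact pow_le_pow_left₀ (by positivity) hs₂s _
    calc min 1 c * (s ^ (n + 1) : ℝ)⁻¹
        ≤ c * (s₂ ^ (n + 1) : ℝ)⁻¹ := by
          apply mul_le_mul (min_le_right _ _) hanti (by positivity) hc0.le
      _ ≤ d * |(ξ:ℝ) * r + η| := hmain
      _ = |(ξ:ℝ) * α₁.im + (η:ℝ) * α₂.im| := hV.symm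
      _ ≤ _ := habs
end
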